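/- arXiv:1408.3962 — 3 statements merged into one kernel-verified Lean document; each statement's English description precedes it below -/
import Mathlib

section
/- If two partial orientations O and O' of a multigraph orient the same edge set and differ by a sequence of directed cycle reversals, then their difference decomposes as an edge-disjoint union of directed cycles; hence every partial orientation is equivalent via cycle reversals to a unique cycle minimal partial orientation with respect to any fixed pair (<, A). -/
open Classical

noncomputable section

/-- A finite multigraph, given by a finite vertex type, a finite edge type, and
two endpoint maps (which also provide a built-in reference direction for each edge). -/
structure Multigraph where
  V : Type
  E : Type
  [fintypeV : Fintype V]
  [fintypeE : Fintype E]
  fst : E → V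
  snd : E → V

attribute [instance] Multigraph.fintypeV Multigraph.fintypeE

namespace Multigraph

variable (G : Multigraph)

/-- Adjacency between vertices using only edges in `S`. -/
def adjOn (S : Set G.E) (u v : G.V) : Prop :=
  ∃ e ∈ S, (G.fst e = u ∧ G.snd e = v) ∨ (G.fst e = v ∧ G.snd e = u)

/-- Reachability (in the undirected sense) using only edges in `S`. -/
def reachOn (S : Set G.E) : G.V → G.V → Prop :=
  Relation.ReflTransGen (G.adjOn S)

def Connected : Prop := ∀ u v : G.V, G.reachOn Set.univ u v

def IsLoop (e : G.E) : Prop := G.fst e = G.snd e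

def IsBridge (e : G.E) : Prop := ¬ G.reachOn {f | f ≠ e} (G.fst e) (G.snd e)

/-- Number of connected components of the spanning subgraph with edge set `S`. -/
def comps (S : Set G.E) : ℕ := Nat.card (Quot (G.reachOn S))

/-- Rank of an edge set: `|V|` minus the number of components it spans. -/
def rk (S : Set G.E) : ℕ := Fintype.card G.V - G.comps S

/-- The Tutte polynomial, via the corank-nullity (subgraph) expansion. -/
def tutte (x y : ℚ) : ℚ :=
  ∑ S : Finset G.E,
    (x - 1) ^ (G.rk Set.univ - G.rk (↑S : Set G.E)) * (y - 1) ^ (S.card - G.rk (↑S : Set G.E))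

/-- The genus (cycle rank) `|E| - |V| + 1` of a connected multigraph. -/
def genus : ℕ := Fintype.card G.E + 1 - Fintype.card G.V

/-- A partial orientation: each edge is unoriented (`none`), oriented in the reference
direction `fst → snd` (`some true`), or oriented oppositely (`some false`). -/
abbrev PartialOrientation := G.E → Option Bool

/-- The tail of edge `e` traversed in direction `b` (`true` = `fst → snd`). -/
def dtail (e : G.E) (b : Bool) : G.V := if b then G.fst e else G.snd e

/-- The head of edge `e` traversed in direction `b` (`true` = `fst → snd`). -/
def dhead (e : G.E) (b : Bool) : G.V := if b then G.snd e else G.fst e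

/-- Directed adjacency under a partial orientation. -/
def dAdj (O : G.PartialOrientation) (u v : G.V) : Prop :=
  ∃ e b, O e = some b ∧ G.dtail e b = u ∧ G.dhead e b = v

/-- Directed reachability under a partial orientation. -/
def dReach (O : G.PartialOrientation) : G.V → G.V → Prop :=
  Relation.ReflTransGen (G.dAdj O)

/-- A partial orientation is acyclic iff it contains no directed cycle, equivalently there
is no oriented edge together with a directed path from its head back to its tail. -/
def Acyclic (O : G.PartialOrientation) : Prop :=
  ¬ ∃ e b, O e = some b ∧ G.dReach O (G.dhead e b) (G.dtail e b)

/-- `e` crosses the cut determined by the vertex set `X`. -/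
def crosses (X : Set G.V) (e : G.E) : Prop := ¬ ((G.fst e ∈ X) ↔ (G.snd e ∈ X))

/-- `(X, Xᶜ)` is a directed cut of `O`: the cut is nonempty and every crossing edge is
oriented from `X` to `Xᶜ`. -/
def IsDirCut (O : G.PartialOrientation) (X : Set G.V) : Prop :=
  (∃ e, G.crosses X e) ∧
  ∀ e, G.crosses X e →
    (G.fst e ∈ X → O e = some true) ∧ (G.snd e ∈ X → O e = some false)

/-- A partial orientation is strongly connected iff it contains no directed cut. -/
def StronglyConnected (O : G.PartialOrientation) : Prop :=
  ¬ ∃ X, G.IsDirCut O X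

/-- A directed cycle of `O`: a nonempty cyclically chained list of oriented steps using
pairwise distinct edges, each oriented in `O` as traversed. -/
def IsDCycle (O : G.PartialOrientation) (c : List (G.E × Bool)) : Prop :=
  c ≠ [] ∧ (∀ s ∈ c, O s.1 = some s.2) ∧
  List.Chain' (fun s t => G.dhead s.1 s.2 = G.dtail t.1 t.2) (c ++ c.take 1) ∧
  (c.map Prod.fst).Nodup

/-- A half-open path: a directed path (all steps but the last oriented in `O`) followed by
an unoriented edge, imagined with the direction that would extend the path. -/
def IsHalfOpenPath (O : G.PartialOrientation) (p : List (G.E × Bool)) : Prop :=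
  2 ≤ p.length ∧
  List.Chain' (fun s t => G.dhead s.1 s.2 = G.dtail t.1 t.2) p ∧
  (p.map Prod.fst).Nodup ∧
  (∀ s ∈ p.dropLast, O s.1 = some s.2) ∧
  ∀ h : p ≠ [], O (p.getLast h).1 = none

/-- `O'` is obtained from `O` by reversing one directed cut. -/
def cutRev (O O' : G.PartialOrientation) : Prop :=
  ∃ X, G.IsDirCut O X ∧ (∀ e, ¬ G.crosses X e → O' e = O e) ∧
    (∀ e, G.crosses X e → O' e = (O e).map not)

/-- `O'` is obtained from `O` by reversing one directed cycle. -/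
def cycleRev (O O' : G.PartialOrientation) : Prop :=
  ∃ c, G.IsDCycle O c ∧ (∀ e, e ∉ c.map Prod.fst → O' e = O e) ∧
    (∀ s ∈ c, O' s.1 = some (!s.2))

/-- `O'` is obtained from `O` by a Jacob's ladder cascade along a half-open path:
the first edge becomes unoriented and all other edges get the reversed direction. -/
def cascade (O O' : G.PartialOrientation) : Prop :=
  ∃ p, G.IsHalfOpenPath O p ∧ (∀ e, e ∉ p.map Prod.fst → O' e = O e) ∧
    (∀ h : p ≠ [], O' (p.head h).1 = none) ∧
    (∀ s ∈ p.tail, O' s.1 = some (!s.2))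

/-- An edge pivot at a vertex `v`: unorient an edge `e'` oriented into `v` and orient a
previously unoriented edge `e` toward `v`. -/
def pivot (O O' : G.PartialOrientation) : Prop :=
  ∃ e e' b b', e ≠ e' ∧ O e = none ∧ O e' = some b' ∧
    G.dhead e b = G.dhead e' b' ∧
    O' e = some b ∧ O' e' = none ∧ ∀ f, f ≠ e → f ≠ e' → O' f = O f

/-- A directed cut of `O` is minimal w.r.t. `(<, A)` if its `<`-minimum crossing edge is
oriented as in the reference orientation `A`. -/
def MinimalCut [LinearOrder G.E] (A : G.E → Bool) (O : G.PartialOrientation)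
    (X : Set G.V) : Prop :=
  ∃ e, G.crosses X e ∧ (∀ e', G.crosses X e' → e ≤ e') ∧ O e = some (A e)

/-- A partial orientation is cut minimal if every directed cut in it is minimal. -/
def CutMinimal [LinearOrder G.E] (A : G.E → Bool) (O : G.PartialOrientation) : Prop :=
  ∀ X, G.IsDirCut O X → G.MinimalCut A O X

/-- A list of steps is minimal w.r.t. `(<, A)` if its `<`-minimum edge is traversed in the
direction given by the reference orientation `A`. -/
def MinimalSteps [LinearOrder G.E] (A : G.E → Bool) (c : List (G.E × Bool)) : Prop :=
  ∃ s ∈ c, (∀ t ∈ c, s.1 ≤ t.1) ∧ s.2 = A s.1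

/-- A partial orientation is cycle minimal if every directed cycle in it is minimal. -/
def CycleMinimal [LinearOrder G.E] (A : G.E → Bool) (O : G.PartialOrientation) : Prop :=
  ∀ c, G.IsDCycle O c → G.MinimalSteps A c

/-- A partial orientation is cycle-path minimal if every directed cycle and every
half-open path in it is minimal. -/
def CyclePathMinimal [LinearOrder G.E] (A : G.E → Bool) (O : G.PartialOrientation) : Prop :=
  G.CycleMinimal A O ∧ ∀ p, G.IsHalfOpenPath O p → G.MinimalSteps A p

/-- The indegree of a vertex: the number of edges oriented toward it. -/
def indeg (O : G.PartialOrientation) (v : G.V) : ℕ :=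
  Nat.card {e : G.E // ∃ b, O e = some b ∧ G.dhead e b = v}

/-- Orient the (previously unoriented) edge `e` in direction `b`. -/
def orient (O : G.PartialOrientation) (e : G.E) (b : Bool) : G.PartialOrientation :=
  fun f => if f = e then some b else O f

/-- Deletion of the edge `e`. -/
def deleteEdge (e : G.E) : Multigraph where
  V := G.V
  E := {f : G.E // f ≠ e}
  fintypeE := Subtype.fintype _
  fst := fun f => G.fst f.1
  snd := fun f => G.snd f.1

/-- Contraction of the edge `e`: identify its two endpoints and remove `e`. -/
def contractEdge (e : G.E) : Multigraph where
  V := Quot (fun a b => a = G.fst e ∧ b = G.snd e)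
  E := {f : G.E // f ≠ e}
  fintypeV := Fintype.ofSurjective (Quot.mk _) (Quot.mk_surjective)
  fintypeE := Subtype.fintype _
  fst := fun f => Quot.mk _ (G.fst f.1)
  snd := fun f => Quot.mk _ (G.snd f.1)

/-- The number of acyclic partial orientations of `G`. -/
def numAcyclic : ℕ := Nat.card {O : G.PartialOrientation // G.Acyclic O}

/-- The number of strongly connected partial orientations of `G`. -/
def numStrong : ℕ := Nat.card {O : G.PartialOrientation // G.StronglyConnected O}

end Multigraph

namespace Stmt8Aux


variable {α V : Type} (h t : α → V)

lemma chain_map : ∀ p : List α, List.Chain' (fun a b => h a = t b) p →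
    p.dropLast.map h = p.tail.map t
  | [] => by simp
  | [a] => by simp
  | a :: b :: p => fun hc => by
    simp only [List.Chain'] at hc; rw [List.isChain_cons_cons] at hc
    have ih := chain_map (b :: p) hc.2
    simpa [ih] using hc.1

lemma cycle_count (l : List α) (hne : l ≠ [])
    (hc : List.Chain' (fun a b => h a = t b) (l ++ l.take 1)) (v : V) :
    l.countP (fun a => decide (h a = v)) = l.countP (fun a => decide (t a = v)) := by
  have htake : l.take 1 = [l.head hne] := by
    cases l with
    | nil => exact absurd rfl hne
    | cons a l => simp
  rw [htake] at hc
  have hmap := chain_map h t _ hc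
  rw [List.dropLast_concat] at hmap
  have htail : (l ++ [l.head hne]).tail = l.tail ++ [l.head hne] := by
    cases l with
    | nil => exact absurd rfl hne
    | cons a l => simp
  rw [htail] at hmap
  have hperm : (l.tail ++ [l.head hne]).Perm l := by
    refine (List.perm_append_comm).trans ?_
    cases l with
    | nil => exact absurd rfl hne
    | cons a l => simp
  calc l.countP (fun a => decide (h a = v))
      = (l.map h).countP (fun x => decide (x = v)) := by
        rw [List.countP_map]; rfl
    _ = ((l.tail ++ [l.head hne]).map t).countP (fun x => decide (x = v)) := by rw [hmap]
    _ = (l.tail ++ [l.head hne]).countP (fun a => decide (t a = v)) := by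
        rw [List.countP_map]; rfl
    _ = l.countP (fun a => decide (t a = v)) := hperm.countP_eq _

lemma path_count (p : List α) (hne : p ≠ [])
    (hc : List.Chain' (fun a b => h a = t b) p) (v : V)
    (hv : h (p.getLast hne) = v) :
    p.countP (fun a => decide (h a = v)) + (if t (p.head hne) = v then 1 else 0)
      = p.countP (fun a => decide (t a = v)) + 1 := by
  have hmap := chain_map h t p hc
  have h1 : p.countP (fun a => decide (h a = v))
      = p.tail.countP (fun a => decide (t a = v)) + 1 := by
    have hsplit : p = p.dropLast ++ [p.getLast hne] := (List.dropLast_append_getLast hne).symm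
    calc p.countP (fun a => decide (h a = v))
        = (p.dropLast ++ [p.getLast hne]).countP (fun a => decide (h a = v)) := by
          rw [← hsplit]
      _ = p.dropLast.countP (fun a => decide (h a = v)) + 1 := by
          rw [List.countP_append]; simp [hv]
      _ = p.tail.countP (fun a => decide (t a = v)) + 1 := by
          congr 1
          calc p.dropLast.countP (fun a => decide (h a = v))
              = (p.dropLast.map h).countP (fun x => decide (x = v)) := by
                rw [List.countP_map]; rfl
            _ = (p.tail.map t).countP (fun x => decide (x = v)) := by rw [hmap]
            _ = p.tail.countP (fun a => decide (t a = v)) := by rw [List.countP_map]; rfl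
  have h2 : p.countP (fun a => decide (t a = v))
      = (if t (p.head hne) = v then 1 else 0) + p.tail.countP (fun a => decide (t a = v)) := by
    have hsplit : p = p.head hne :: p.tail := (List.cons_head_tail hne).symm
    conv_lhs => rw [hsplit]
    rw [List.countP_cons]
    by_cases hh : t (p.head hne) = v <;> simp [hh] <;> omega
  omega


open Multigraph

variable (G : Multigraph)

def hd (O : G.PartialOrientation) (e : G.E) : G.V := G.dhead e ((O e).iget)
def tl (O : G.PartialOrientation) (e : G.E) : G.V := G.dtail e ((O e).iget)

lemma dhead_not (e : G.E) (b : Bool) : G.dhead e (!b) = G.dtail e b := by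
  cases b <;> simp [dhead, dtail]

lemma dtail_not (e : G.E) (b : Bool) : G.dtail e (!b) = G.dhead e b := by
  cases b <;> simp [dhead, dtail]

/-- Balance condition: in-count = out-count at every vertex. -/
def bal (O : G.PartialOrientation) (D : Finset G.E) : Prop :=
  ∀ v, (D.filter fun e => hd G O e = v).card = (D.filter fun e => tl G O e = v).card

/-- A directed cycle as a list of edges with direction induced by `O`. -/
def CycEdges (O : G.PartialOrientation) (l : List G.E) : Prop :=
  l ≠ [] ∧ l.Nodup ∧ (∀ e ∈ l, O e ≠ none) ∧
    List.Chain' (fun a b => hd G O a = tl G O b) (l ++ l.take 1)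

lemma countP_toFinset {l : List G.E} (hnd : l.Nodup) (p : G.E → Prop) :
    (l.toFinset.filter p).card = l.countP (fun a => decide (p a)) := by
  classical
  rw [List.countP_eq_length_filter]
  have : (List.filter (fun a => decide (p a)) l).toFinset = l.toFinset.filter p := by
    rw [List.toFinset_filter]
    simp
  rw [← this, List.toFinset_card_of_nodup (hnd.filter _)]

lemma cyc_bal {O : G.PartialOrientation} {l : List G.E} (hc : CycEdges G O l) :
    bal G O l.toFinset := by
  intro v
  rw [countP_toFinset G hc.2.1, countP_toFinset G hc.2.1]
  exact cycle_count (hd G O) (tl G O) l hc.1 hc.2.2.2 v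


def toSteps (O : G.PartialOrientation) (l : List G.E) : List (G.E × Bool) :=
  l.map (fun e => (e, (O e).iget))

lemma toSteps_map_fst (O : G.PartialOrientation) (l : List G.E) :
    (toSteps G O l).map Prod.fst = l := by
  simp only [toSteps, List.map_map]
  exact List.map_id l

lemma isDCycle_toSteps {O : G.PartialOrientation} {l : List G.E} (hc : CycEdges G O l) :
    G.IsDCycle O (toSteps G O l) := by
  obtain ⟨hne, hnd, hsome, hch⟩ := hc
  refine ⟨by simp [toSteps, hne], ?_, ?_, by rw [toSteps_map_fst]; exact hnd⟩
  · intro s hs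
    simp only [toSteps, List.mem_map] at hs
    obtain ⟨e, he, rfl⟩ := hs
    obtain ⟨b, hb⟩ := Option.ne_none_iff_exists'.mp (hsome e he)
    simp [hb]
  · have : toSteps G O l ++ (toSteps G O l).take 1 = toSteps G O (l ++ l.take 1) := by
      simp [toSteps, List.map_take]
    rw [this, toSteps]; simp only [List.Chain']; rw [List.isChain_map]
    exact hch

lemma cycEdges_of_isDCycle {O : G.PartialOrientation} {c : List (G.E × Bool)}
    (hc : G.IsDCycle O c) : CycEdges G O (c.map Prod.fst) ∧ toSteps G O (c.map Prod.fst) = c := by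
  obtain ⟨hne, hsome, hch, hnd⟩ := hc
  have hts : toSteps G O (c.map Prod.fst) = c := by
    rw [toSteps, List.map_map]
    conv_rhs => rw [← List.map_id c]
    refine List.map_congr_left ?_
    intro s hs
    have := hsome s hs
    simp [Function.comp, this]
  refine ⟨⟨by simpa using hne, hnd, ?_, ?_⟩, hts⟩
  · intro e he
    rw [List.mem_map] at he
    obtain ⟨s, hs, rfl⟩ := he
    rw [hsome s hs]; simp
  · have h2 : toSteps G O ((c.map Prod.fst) ++ (c.map Prod.fst).take 1)
        = c ++ c.take 1 := by
      simp only [toSteps] at hts ⊢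
      rw [List.map_append, List.map_take, hts]
    have := hch
    rw [← h2, toSteps] at this; simp only [List.Chain'] at this; rw [List.isChain_map] at this
    exact this

lemma extract_step (O : G.PartialOrientation) (D : Finset G.E)
    (hbal : bal G O D) (p : List G.E) (hne : p ≠ []) (hnd : p.Nodup)
    (hmem : ∀ e ∈ p, e ∈ D) (hD : ∀ e ∈ D, O e ≠ none)
    (hch : List.Chain' (fun a b => hd G O a = tl G O b) p) :
    (∃ l, CycEdges G O l ∧ ∀ e ∈ l, e ∈ D) ∨
    ∃ f, f ∈ D ∧ f ∉ p ∧ hd G O (p.getLast hne) = tl G O f := by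
  set v := hd G O (p.getLast hne) with hv
  by_cases hcl : tl G O (p.head hne) = v
  · left
    refine ⟨p, ⟨hne, hnd, fun e he => hD e (hmem e he), ?_⟩, hmem⟩
    have htake : p.take 1 = [p.head hne] := by
      cases p with
      | nil => exact absurd rfl hne
      | cons a l => simp
    rw [htake]; simp only [List.Chain']; rw [List.isChain_append]
    refine ⟨hch, List.isChain_singleton _, ?_⟩
    intro x hx y hy
    rw [List.getLast?_eq_getLast hne, Option.mem_def, Option.some_inj] at hx
    simp only [List.head?_cons, Option.mem_def, Option.some_inj] at hy
    subst hx; subst hy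
    rw [← hv, hcl]
  · right
    by_contra hcon
    push_neg at hcon
    have hsub : D.filter (fun e => tl G O e = v) ⊆ p.toFinset.filter (fun e => tl G O e = v) := by
      intro f hf
      rw [Finset.mem_filter] at hf ⊢
      refine ⟨List.mem_toFinset.mpr ?_, hf.2⟩
      by_contra hfp
      exact (hcon f hf.1 hfp) hf.2.symm
    have hpsub : p.toFinset ⊆ D := fun e he => hmem e (List.mem_toFinset.mp he)
    have hcount := path_count (hd G O) (tl G O) p hne hch v hv.symm
    rw [if_neg hcl] at hcount
    have h1 : (p.toFinset.filter (fun e => hd G O e = v)).card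
        = p.countP (fun a => decide (hd G O a = v)) := countP_toFinset G hnd _
    have h2 : (p.toFinset.filter (fun e => tl G O e = v)).card
        = p.countP (fun a => decide (tl G O a = v)) := countP_toFinset G hnd _
    have h3 : (p.toFinset.filter (fun e => hd G O e = v)).card
        ≤ (D.filter (fun e => hd G O e = v)).card :=
      Finset.card_le_card (Finset.filter_subset_filter _ hpsub)
    have h4 : (D.filter (fun e => tl G O e = v)).card
        ≤ (p.toFinset.filter (fun e => tl G O e = v)).card := Finset.card_le_card hsub
    have h5 := hbal v
    omega

lemma extract_aux (O : G.PartialOrientation) (D : Finset G.E)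
    (hD : ∀ e ∈ D, O e ≠ none) (hbal : bal G O D) :
    ∀ (k : ℕ) (p : List G.E) (hne : p ≠ []), p.Nodup → (∀ e ∈ p, e ∈ D) →
      List.Chain' (fun a b => hd G O a = tl G O b) p → D.card ≤ p.length + k →
      ∃ l, CycEdges G O l ∧ ∀ e ∈ l, e ∈ D := by
  intro k
  induction k with
  | zero =>
    intro p hne hnd hmem hch hcard
    rcases extract_step G O D hbal p hne hnd hmem hD hch with h | ⟨f, hfD, hfp, hf⟩
    · exact h
    · exfalso
      have hnd' : (p ++ [f]).Nodup := by
        rw [List.nodup_append]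
        exact ⟨hnd, List.nodup_singleton f, by simpa using fun a (ha : a ∈ p) (h : a = f) => hfp (h ▸ ha)⟩
      have hsub : (p ++ [f]).toFinset ⊆ D := by
        intro e he
        rw [List.mem_toFinset, List.mem_append] at he
        rcases he with he | he
        · exact hmem e he
        · simp only [List.mem_singleton] at he; subst he; exact hfD
      have := Finset.card_le_card hsub
      rw [List.toFinset_card_of_nodup hnd'] at this
      simp at this
      omega
  | succ k ih =>
    intro p hne hnd hmem hch hcard
    rcases extract_step G O D hbal p hne hnd hmem hD hch with h | ⟨f, hfD, hfp, hf⟩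
    · exact h
    · refine ih (p ++ [f]) (by simp) ?_ ?_ ?_ ?_
      · rw [List.nodup_append]
        exact ⟨hnd, List.nodup_singleton f, by simpa using fun a (ha : a ∈ p) (h : a = f) => hfp (h ▸ ha)⟩
      · intro e he
        rw [List.mem_append] at he
        rcases he with he | he
        · exact hmem e he
        · simp only [List.mem_singleton] at he; subst he; exact hfD
      · simp only [List.Chain']; rw [List.isChain_append]
        refine ⟨hch, List.isChain_singleton _, ?_⟩
        intro x hx y hy
        rw [List.getLast?_eq_getLast hne, Option.mem_def, Option.some_inj] at hx
        simp only [List.head?_cons, Option.mem_def, Option.some_inj] at hy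
        subst hx; subst hy
        exact hf
      · simp; omega

lemma extract (O : G.PartialOrientation) (D : Finset G.E)
    (hD : ∀ e ∈ D, O e ≠ none) (hbal : bal G O D) (hne : D.Nonempty) :
    ∃ l, CycEdges G O l ∧ ∀ e ∈ l, e ∈ D := by
  obtain ⟨e₀, he₀⟩ := hne
  refine extract_aux G O D hD hbal D.card [e₀] (by simp) (by simp) (by simpa using he₀)
    (List.isChain_singleton _) (by simp)

lemma bal_sdiff {O : G.PartialOrientation} {D C : Finset G.E}
    (hD : bal G O D) (hC : bal G O C) (hsub : C ⊆ D) : bal G O (D \ C) := by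
  intro v
  have hun : (D \ C) ∪ C = D := Finset.sdiff_union_of_subset hsub
  have hdisj : Disjoint (D \ C) C := Finset.sdiff_disjoint
  have h1 := hD v
  rw [← hun, Finset.filter_union, Finset.filter_union,
    Finset.card_union_of_disjoint (Finset.disjoint_filter_filter hdisj),
    Finset.card_union_of_disjoint (Finset.disjoint_filter_filter hdisj)] at h1
  have h2 := hC v
  omega

lemma decomp (O : G.PartialOrientation) :
    ∀ (n : ℕ) (D : Finset G.E), D.card ≤ n → (∀ e ∈ D, O e ≠ none) → bal G O D →
    ∃ L : List (List G.E), (∀ l ∈ L, CycEdges G O l) ∧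
      L.Pairwise (fun l m => ∀ e ∈ l, e ∉ m) ∧ (∀ e, e ∈ D ↔ ∃ l ∈ L, e ∈ l) := by
  intro n
  induction n with
  | zero =>
    intro D hcard _ _
    have : D = ∅ := Finset.card_eq_zero.mp (Nat.le_zero.mp hcard)
    subst this
    exact ⟨[], by simp, by simp, by simp⟩
  | succ n ih =>
    intro D hcard hD hbal
    rcases D.eq_empty_or_nonempty with rfl | hne
    · exact ⟨[], by simp, by simp, by simp⟩
    obtain ⟨l, hcyc, hsub⟩ := extract G O D hD hbal hne
    have hsub' : l.toFinset ⊆ D := fun e he => hsub e (List.mem_toFinset.mp he)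
    have hlne : l.toFinset.Nonempty := by
      cases l with
      | nil => exact absurd rfl hcyc.1
      | cons a t => exact ⟨a, by simp⟩
    have hcard' : (D \ l.toFinset).card ≤ n := by
      have h1 : (D \ l.toFinset).card = D.card - l.toFinset.card := Finset.card_sdiff_of_subset hsub'
      have h2 : 1 ≤ l.toFinset.card := Finset.card_pos.mpr hlne
      omega
    obtain ⟨L', hL1, hL2, hL3⟩ := ih (D \ l.toFinset)
      hcard' (fun e he => hD e (Finset.mem_sdiff.mp he).1)
      (bal_sdiff G hbal (cyc_bal G hcyc) hsub')
    refine ⟨l :: L', ?_, ?_, ?_⟩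
    · intro m hm
      rcases List.mem_cons.mp hm with rfl | hm
      · exact hcyc
      · exact hL1 m hm
    · rw [List.pairwise_cons]
      refine ⟨?_, hL2⟩
      intro m hm e hel hem
      have : e ∈ D \ l.toFinset := (hL3 e).mpr ⟨m, hm, hem⟩
      exact (Finset.mem_sdiff.mp this).2 (List.mem_toFinset.mpr hel)
    · intro e
      constructor
      · intro heD
        by_cases hel : e ∈ l
        · exact ⟨l, List.mem_cons_self, hel⟩
        · obtain ⟨m, hm, hem⟩ := (hL3 e).mp
            (Finset.mem_sdiff.mpr ⟨heD, fun h => hel (List.mem_toFinset.mp h)⟩)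
          exact ⟨m, List.mem_cons_of_mem _ hm, hem⟩
      · rintro ⟨m, hm, hem⟩
        rcases List.mem_cons.mp hm with rfl | hm
        · exact hsub e hem
        · exact (Finset.mem_sdiff.mp ((hL3 e).mpr ⟨m, hm, hem⟩)).1

lemma mem_map_fst {c : List (G.E × Bool)} {e : G.E} :
    e ∈ c.map Prod.fst ↔ ∃ b, (e, b) ∈ c := by
  rw [List.mem_map]
  constructor
  · rintro ⟨⟨e', b⟩, hs, rfl⟩; exact ⟨b, hs⟩
  · rintro ⟨b, hb⟩; exact ⟨(e, b), hb, rfl⟩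

lemma cycleRev_support {O O' : G.PartialOrientation} (h : G.cycleRev O O') :
    ∀ e, O e = none ↔ O' e = none := by
  obtain ⟨c, hC, hoff, hon⟩ := h
  intro e
  by_cases he : e ∈ c.map Prod.fst
  · obtain ⟨b, hb⟩ := (mem_map_fst G).mp he
    have h1 : O e = some b := hC.2.1 (e, b) hb
    have h2 : O' e = some (!b) := hon (e, b) hb
    simp [h1, h2]
  · rw [hoff e he]

lemma step_bal {O O₂ O₃ : G.PartialOrientation}
    (hsup : ∀ e, O e = none ↔ O₂ e = none)
    (hbal : bal G O (Finset.univ.filter fun e => O e ≠ O₂ e))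
    (hrev : G.cycleRev O₂ O₃) :
    bal G O (Finset.univ.filter fun e => O e ≠ O₃ e) := by
  obtain ⟨c, hC, hoff, hon⟩ := hrev
  set l := c.map Prod.fst with hl
  have cycE : CycEdges G O₂ l := (cycEdges_of_isDCycle G hC).1
  set C := l.toFinset with hCdef
  set D := Finset.univ.filter fun e => O e ≠ O₂ e with hDdef
  set D' := Finset.univ.filter fun e => O e ≠ O₃ e with hD'def
  -- per-edge facts
  have factC : ∀ e ∈ C, ∃ b₀ b, O e = some b₀ ∧ O₂ e = some b ∧ O₃ e = some (!b) := by
    intro e heC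
    rw [hCdef, List.mem_toFinset, hl] at heC
    obtain ⟨b, hb⟩ := (mem_map_fst G).mp heC
    have h2 : O₂ e = some b := hC.2.1 (e, b) hb
    have h3 : O₃ e = some (!b) := hon (e, b) hb
    have h1 : O e ≠ none := fun hn => by
      have := (hsup e).mp hn; rw [h2] at this; cases this
    obtain ⟨b₀, hb₀⟩ := Option.ne_none_iff_exists'.mp h1
    exact ⟨b₀, b, hb₀, h2, h3⟩
  have factNC : ∀ e, e ∉ C → O₃ e = O₂ e := by
    intro e heC
    exact hoff e (by rwa [hCdef, List.mem_toFinset] at heC)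
  -- D' = (D \ C) ∪ (C \ D)
  have hD'eq : D' = (D \ C) ∪ (C \ D) := by
    ext e
    rw [Finset.mem_union, Finset.mem_sdiff, Finset.mem_sdiff, hD'def, hDdef,
      Finset.mem_filter, Finset.mem_filter]
    by_cases heC : e ∈ C
    · obtain ⟨b₀, b, h1, h2, h3⟩ := factC e heC
      constructor
      · rintro ⟨-, hne⟩
        right
        refine ⟨heC, fun h => ?_⟩
        rw [h1, h2] at h
        have hb : b₀ ≠ b := fun hh => h.2 (by rw [hh])
        rw [h1, h3] at hne
        apply hne
        congr 1
        cases b₀ <;> cases b <;> simp_all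
      · rintro (⟨⟨-, -⟩, hc⟩ | ⟨-, hnd⟩)
        · exact absurd heC hc
        · have hb : b₀ = b := by
            by_contra hne
            exact hnd ⟨Finset.mem_univ e, by
              rw [h1, h2]; intro hh; exact hne (by injection hh)⟩
          refine ⟨Finset.mem_univ e, ?_⟩
          rw [h1, h3, hb]
          intro hh
          have hbb : b = !b := by injection hh
          simp at hbb
    · rw [factNC e heC]
      constructor
      · rintro ⟨-, hne⟩
        exact Or.inl ⟨⟨Finset.mem_univ e, hne⟩, heC⟩
      · rintro (⟨⟨-, hne⟩, -⟩ | ⟨hc, -⟩)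
        · exact ⟨Finset.mem_univ e, hne⟩
        · exact absurd hc heC
  -- translation of directions on C ∩ D and C \ D
  have htrans2 : ∀ e ∈ C ∩ D, hd G O₂ e = tl G O e ∧ tl G O₂ e = hd G O e := by
    intro e he
    rw [Finset.mem_inter] at he
    obtain ⟨b₀, b, h1, h2, h3⟩ := factC e he.1
    have hne : O e ≠ O₂ e := by
      have := he.2; rw [hDdef, Finset.mem_filter] at this; exact this.2
    rw [h1, h2] at hne
    have hb : b = !b₀ := by
      cases b₀ <;> cases b <;> simp_all
    unfold hd tl
    rw [h1, h2, hb]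
    exact ⟨dhead_not G e b₀, dtail_not G e b₀⟩
  have htrans1 : ∀ e ∈ C \ D, hd G O₂ e = hd G O e ∧ tl G O₂ e = tl G O e := by
    intro e he
    rw [Finset.mem_sdiff, hDdef, Finset.mem_filter] at he
    have hOe : O e = O₂ e := by
      by_contra hcon
      exact he.2 ⟨Finset.mem_univ e, hcon⟩
    unfold hd tl
    rw [hOe]
    exact ⟨rfl, rfl⟩
  have hbalC : bal G O₂ C := cyc_bal G cycE
  -- the counting argument
  intro v
  have hsplitD : D \ C ∪ D ∩ C = D := Finset.sdiff_union_inter D C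
  have hsplitC : C \ D ∪ C ∩ D = C := Finset.sdiff_union_inter C D
  have hdisjD : Disjoint (D \ C) (D ∩ C) := Finset.disjoint_sdiff_inter D C
  have hdisjC : Disjoint (C \ D) (C ∩ D) := Finset.disjoint_sdiff_inter C D
  have hdisj' : Disjoint (D \ C) (C \ D) := disjoint_sdiff_sdiff
  have hDv := hbal v
  rw [← hsplitD, Finset.filter_union, Finset.filter_union,
    Finset.card_union_of_disjoint (Finset.disjoint_filter_filter hdisjD),
    Finset.card_union_of_disjoint (Finset.disjoint_filter_filter hdisjD)] at hDv
  have hCv := hbalC v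
  rw [← hsplitC, Finset.filter_union, Finset.filter_union,
    Finset.card_union_of_disjoint (Finset.disjoint_filter_filter hdisjC),
    Finset.card_union_of_disjoint (Finset.disjoint_filter_filter hdisjC)] at hCv
  have e1 : (C ∩ D).filter (fun e => hd G O₂ e = v) = (C ∩ D).filter (fun e => tl G O e = v) :=
    Finset.filter_congr (fun e he => by rw [(htrans2 e he).1])
  have e2 : (C ∩ D).filter (fun e => tl G O₂ e = v) = (C ∩ D).filter (fun e => hd G O e = v) :=
    Finset.filter_congr (fun e he => by rw [(htrans2 e he).2])
  have e3 : (C \ D).filter (fun e => hd G O₂ e = v) = (C \ D).filter (fun e => hd G O e = v) :=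
    Finset.filter_congr (fun e he => by rw [(htrans1 e he).1])
  have e4 : (C \ D).filter (fun e => tl G O₂ e = v) = (C \ D).filter (fun e => tl G O e = v) :=
    Finset.filter_congr (fun e he => by rw [(htrans1 e he).2])
  rw [e1, e2, e3, e4] at hCv
  have hcomm : C ∩ D = D ∩ C := Finset.inter_comm C D
  rw [hcomm] at hCv
  rw [hD'eq, Finset.filter_union, Finset.filter_union,
    Finset.card_union_of_disjoint (Finset.disjoint_filter_filter hdisj'),
    Finset.card_union_of_disjoint (Finset.disjoint_filter_filter hdisj')]
  omega

lemma reach_bal {O O' : G.PartialOrientation}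
    (h : Relation.ReflTransGen G.cycleRev O O') :
    (∀ e, O e = none ↔ O' e = none) ∧
      bal G O (Finset.univ.filter fun e => O e ≠ O' e) := by
  induction h with
  | refl =>
    refine ⟨fun e => Iff.rfl, fun v => ?_⟩
    simp
  | tail hstep hrev ih =>
    obtain ⟨ihsup, ihbal⟩ := ih
    refine ⟨fun e => (ihsup e).trans (cycleRev_support G hrev e), ?_⟩
    exact step_bal G ihsup ihbal hrev

lemma part1 (O O' : G.PartialOrientation)
    (hreach : Relation.ReflTransGen G.cycleRev O O') :
    ∃ L : List (List (G.E × Bool)), (∀ c ∈ L, G.IsDCycle O c) ∧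
      L.Pairwise (fun c d => ∀ e, e ∈ c.map Prod.fst → e ∉ d.map Prod.fst) ∧
      ∀ e, (O e ≠ O' e ↔ ∃ c ∈ L, e ∈ c.map Prod.fst) := by
  obtain ⟨hsup, hbal⟩ := reach_bal G hreach
  set D := Finset.univ.filter fun e => O e ≠ O' e with hDdef
  have hD : ∀ e ∈ D, O e ≠ none := by
    intro e he hn
    rw [hDdef, Finset.mem_filter] at he
    exact he.2 (hn.trans ((hsup e).mp hn).symm)
  obtain ⟨L, hL1, hL2, hL3⟩ := decomp G O D.card D le_rfl hD hbal
  refine ⟨L.map (toSteps G O), ?_, ?_, ?_⟩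
  · intro c hc
    rw [List.mem_map] at hc
    obtain ⟨m, hm, rfl⟩ := hc
    exact isDCycle_toSteps G (hL1 m hm)
  · refine List.Pairwise.map _ ?_ hL2
    intro a b hab e he1 he2
    rw [toSteps_map_fst] at he1 he2
    exact hab e he1 he2
  · intro e
    have : (∃ c ∈ L.map (toSteps G O), e ∈ c.map Prod.fst) ↔ ∃ m ∈ L, e ∈ m := by
      constructor
      · rintro ⟨c, hc, hec⟩
        rw [List.mem_map] at hc
        obtain ⟨m, hm, rfl⟩ := hc
        rw [toSteps_map_fst] at hec
        exact ⟨m, hm, hec⟩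
      · rintro ⟨m, hm, hem⟩
        refine ⟨toSteps G O m, List.mem_map_of_mem hm, ?_⟩
        rwa [toSteps_map_fst]
    rw [this, ← hL3 e, hDdef, Finset.mem_filter]
    simp

lemma take_one {β : Type} : ∀ (l : List β) (h : l ≠ []), l.take 1 = [l.head h]
  | [], h => absurd rfl h
  | _ :: _, _ => by simp

lemma cycleRev_symm {O O' : G.PartialOrientation} (h : G.cycleRev O O') :
    G.cycleRev O' O := by
  obtain ⟨c, ⟨hne, hsome, hch, hnd⟩, hoff, hon⟩ := h
  set σ : G.E × Bool → G.E × Bool := fun s => (s.1, !s.2) with hσ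
  set c' : List (G.E × Bool) := (c.map σ).reverse with hc'
  have hc'ne : c' ≠ [] := by simp [hc', hne]
  have hfst : c'.map Prod.fst = (c.map Prod.fst).reverse := by
    rw [hc', List.map_reverse, List.map_map]
    rfl
  have hmemfst : ∀ e : G.E, e ∈ c'.map Prod.fst ↔ e ∈ c.map Prod.fst := by
    intro e; rw [hfst, List.mem_reverse]
  refine ⟨c', ⟨hc'ne, ?_, ?_, ?_⟩, ?_, ?_⟩
  · intro s hs
    rw [hc', List.mem_reverse, List.mem_map] at hs
    obtain ⟨t, ht, rfl⟩ := hs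
    exact hon t ht
  · -- chain condition
    have htake : c.take 1 = [c.head hne] := take_one c hne
    have htake' : c'.take 1 = [c'.head hc'ne] := take_one c' hc'ne
    rw [htake] at hch
    simp only [List.Chain'] at hch; rw [List.isChain_append] at hch
    obtain ⟨hch1, -, hch2⟩ := hch
    have hlast : c'.head hc'ne = σ (c.getLast hne) := by
      show (List.map σ c).reverse.head (by simp [hne]) = σ (c.getLast hne)
      rw [List.head_reverse, List.getLast_map]
    have hRlast : G.dhead (c.getLast hne).1 (c.getLast hne).2
        = G.dtail (c.head hne).1 (c.head hne).2 := by
      apply hch2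
      · rw [List.getLast?_eq_getLast hne]; rfl
      · simp
    rw [htake', hlast]
    have heq : c' ++ [σ (c.getLast hne)] = (List.map σ (c.getLast hne :: c)).reverse := by
      rw [hc']
      simp
    rw [heq]; simp only [List.Chain']; rw [List.isChain_reverse, List.isChain_map]
    rw [List.isChain_cons]
    constructor
    · intro y hy
      cases c with
      | nil => exact absurd rfl hne
      | cons a l =>
        simp only [List.head?_cons, Option.mem_def, Option.some_inj] at hy
        subst hy
        show G.dhead _ (!_) = G.dtail _ (!_)
        rw [dhead_not, dtail_not]
        exact hRlast.symm
    · -- Chain' (fun a b => flip R (σ a) (σ b)) c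
      refine List.IsChain.imp ?_ hch1
      intro a b hab
      show G.dhead b.1 (!b.2) = G.dtail a.1 (!a.2)
      rw [dhead_not, dtail_not]
      exact hab.symm
  · rw [hfst]
    exact List.nodup_reverse.mpr hnd
  · intro e he
    rw [hmemfst] at he
    rw [hoff e he]
  · intro s hs
    rw [hc', List.mem_reverse, List.mem_map] at hs
    obtain ⟨t, ht, rfl⟩ := hs
    show O t.1 = some (!(!t.2))
    rw [Bool.not_not]
    exact hsome t ht

section Minimal

variable [LinearOrder G.E]

def wt (e : G.E) : ℕ := (Finset.univ.filter fun f => e < f).card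

def phi (A : G.E → Bool) (O : G.PartialOrientation) : ℕ :=
  ∑ e ∈ Finset.univ.filter (fun e => O e = some (!(A e))), 2 ^ wt G e

lemma wt_lt {e f : G.E} (h : e < f) : wt G f < wt G e := by
  apply Finset.card_lt_card
  constructor
  · intro g hg
    rw [Finset.mem_filter] at hg ⊢
    exact ⟨hg.1, h.trans hg.2⟩
  · intro hcon
    have : f ∈ Finset.univ.filter fun g => e < g := Finset.mem_filter.mpr ⟨Finset.mem_univ f, h⟩
    have := hcon this
    rw [Finset.mem_filter] at this
    exact lt_irrefl f this.2

lemma geom_two (n : ℕ) : ∑ i ∈ Finset.range n, 2 ^ i = 2 ^ n - 1 := by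
  induction n with
  | zero => simp
  | succ n ih =>
    rw [Finset.sum_range_succ, ih, pow_succ]
    have : 1 ≤ 2 ^ n := Nat.one_le_two_pow
    omega

lemma sum_wt_lt (e₀ : G.E) (T : Finset G.E) (hT : ∀ e ∈ T, e₀ < e) :
    ∑ e ∈ T, 2 ^ wt G e < 2 ^ wt G e₀ := by
  have hinj : ∀ x ∈ T, ∀ y ∈ T, wt G x = wt G y → x = y := by
    intro x hx y hy hxy
    by_contra hne
    rcases lt_or_gt_of_ne hne with h | h
    · exact absurd hxy (Nat.ne_of_gt (wt_lt G h))
    · exact absurd hxy (Nat.ne_of_lt (wt_lt G h))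
  rw [← Finset.sum_image (f := fun i => 2 ^ i) hinj]
  have hsub : T.image (wt G) ⊆ Finset.range (wt G e₀) := by
    intro i hi
    rw [Finset.mem_image] at hi
    obtain ⟨e, he, rfl⟩ := hi
    rw [Finset.mem_range]
    exact wt_lt G (hT e he)
  calc ∑ i ∈ T.image (wt G), 2 ^ i ≤ ∑ i ∈ Finset.range (wt G e₀), 2 ^ i :=
        Finset.sum_le_sum_of_subset hsub
    _ = 2 ^ wt G e₀ - 1 := geom_two _
    _ < 2 ^ wt G e₀ := by
        have : 1 ≤ 2 ^ wt G e₀ := Nat.one_le_two_pow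
        omega

lemma min_bad_edge (A : G.E → Bool) {O : G.PartialOrientation} (c : List (G.E × Bool))
    (hc : G.IsDCycle O c) (hnmin : ¬ G.MinimalSteps A c) :
    ∃ e₀ b₀, (e₀, b₀) ∈ c ∧ (∀ e ∈ c.map Prod.fst, e₀ ≤ e) ∧ O e₀ = some (!(A e₀)) := by
  set l := c.map Prod.fst with hl
  have hlne : l.toFinset.Nonempty := by
    cases c with
    | nil => exact absurd rfl hc.1
    | cons a t => exact ⟨a.1, by simp [hl]⟩
  set e₀ := l.toFinset.min' hlne with he₀
  have he₀l : e₀ ∈ l := List.mem_toFinset.mp (l.toFinset.min'_mem hlne)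
  obtain ⟨b₀, hb₀⟩ := (mem_map_fst G).mp (hl ▸ he₀l)
  have hle : ∀ e ∈ c.map Prod.fst, e₀ ≤ e := by
    intro e hel
    exact l.toFinset.min'_le e (List.mem_toFinset.mpr (hl ▸ hel))
  rw [Multigraph.MinimalSteps] at hnmin
  push_neg at hnmin
  have hb := hnmin (e₀, b₀) hb₀ (fun t ht => hle t.1 (hl ▸ List.mem_map_of_mem (f := Prod.fst) ht))
  have hb' : b₀ = !(A e₀) := by
    cases hA : A e₀ <;> cases hB : b₀ <;> simp_all
  refine ⟨e₀, b₀, hb₀, hle, ?_⟩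
  rw [hc.2.1 (e₀, b₀) hb₀]
  rw [← hb']

lemma exists_min (A : G.E → Bool) :
    ∀ (n : ℕ) (O : G.PartialOrientation), phi G A O ≤ n →
    ∃ O', Relation.ReflTransGen G.cycleRev O O' ∧ G.CycleMinimal A O' := by
  intro n
  induction n with
  | zero =>
    intro O hO
    by_cases hmin : G.CycleMinimal A O
    · exact ⟨O, Relation.ReflTransGen.refl, hmin⟩
    · exfalso
      rw [Multigraph.CycleMinimal] at hmin
      push_neg at hmin
      obtain ⟨c, hc, hnmin⟩ := hmin
      obtain ⟨e₀, s₀2, hs₀, hle, hOe₀⟩ := min_bad_edge G A c hc hnmin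
      have : 2 ^ wt G e₀ ≤ phi G A O := by
        apply Finset.single_le_sum (f := fun e => 2 ^ wt G e) (fun i _ => Nat.zero_le _)
        rw [Finset.mem_filter]
        exact ⟨Finset.mem_univ e₀, hOe₀⟩
      have h1 : 1 ≤ 2 ^ wt G e₀ := Nat.one_le_two_pow
      omega
  | succ n ih =>
    intro O hO
    by_cases hmin : G.CycleMinimal A O
    · exact ⟨O, Relation.ReflTransGen.refl, hmin⟩
    · rw [Multigraph.CycleMinimal] at hmin
      push_neg at hmin
      obtain ⟨c, hc, hnmin⟩ := hmin
      obtain ⟨e₀, s₀2, hs₀, hle, hOe₀⟩ := min_bad_edge G A c hc hnmin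
      set l := c.map Prod.fst with hl
      set O' : G.PartialOrientation := fun e => if e ∈ l then Option.map not (O e) else O e
        with hO'
      have he₀l : e₀ ∈ l := by rw [hl, mem_map_fst]; exact ⟨s₀2, hs₀⟩
      have hrev : G.cycleRev O O' := by
        refine ⟨c, hc, ?_, ?_⟩
        · intro e he; rw [hO']; simp only [← hl]; rw [if_neg he]
        · intro s hs
          rw [hO']
          simp only [← hl]
          rw [if_pos (by rw [hl, mem_map_fst]; exact ⟨s.2, hs⟩), hc.2.1 s hs]
          rfl
      have hphi : phi G A O' < phi G A O := by
        set S := Finset.univ.filter (fun e => O e = some (!(A e))) with hS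
        set S' := Finset.univ.filter (fun e => O' e = some (!(A e))) with hS'
        set T := Finset.univ.filter (fun e => e₀ < e) with hT
        have he₀S : e₀ ∈ S := Finset.mem_filter.mpr ⟨Finset.mem_univ e₀, hOe₀⟩
        have hsub : S' ⊆ (S.erase e₀) ∪ T := by
          intro e he
          rw [hS', Finset.mem_filter] at he
          obtain ⟨-, he⟩ := he
          by_cases hel : e ∈ l
          · by_cases hee : e = e₀
            · exfalso
              subst hee
              rw [hO'] at he
              simp only [← hl] at he
              rw [if_pos hel, hOe₀] at he
              simp at he
            · have : e₀ < e := lt_of_le_of_ne (hle e hel) (Ne.symm hee)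
              exact Finset.mem_union_right _ (Finset.mem_filter.mpr ⟨Finset.mem_univ e, this⟩)
          · apply Finset.mem_union_left
            rw [hO'] at he
            simp only [← hl] at he
            rw [if_neg hel] at he
            refine Finset.mem_erase.mpr ⟨fun hcon => hel (hcon ▸ he₀l), ?_⟩
            exact Finset.mem_filter.mpr ⟨Finset.mem_univ e, he⟩
        have h1 : phi G A O' ≤ ∑ e ∈ (S.erase e₀) ∪ T, 2 ^ wt G e :=
          Finset.sum_le_sum_of_subset hsub
        have h2 : ∑ e ∈ (S.erase e₀) ∪ T, 2 ^ wt G e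
            ≤ ∑ e ∈ S.erase e₀, 2 ^ wt G e + ∑ e ∈ T, 2 ^ wt G e := by
          have := Finset.sum_union_inter (s₁ := S.erase e₀) (s₂ := T)
            (f := fun e => 2 ^ wt G e)
          omega
        have h3 : ∑ e ∈ S.erase e₀, 2 ^ wt G e + 2 ^ wt G e₀ = phi G A O :=
          Finset.sum_erase_add S _ he₀S
        have h4 : ∑ e ∈ T, 2 ^ wt G e < 2 ^ wt G e₀ :=
          sum_wt_lt G e₀ T (fun e he => (Finset.mem_filter.mp he).2)
        omega
      obtain ⟨O'', hreach, hmin''⟩ := ih O' (by omega)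
      exact ⟨O'', Relation.ReflTransGen.head hrev hreach, hmin''⟩

lemma min_diff_val (A : G.E → Bool) {O₁ O₂ : G.PartialOrientation}
    (h : Relation.ReflTransGen G.cycleRev O₁ O₂) (hmin : G.CycleMinimal A O₁)
    (hne : (Finset.univ.filter fun e => O₁ e ≠ O₂ e).Nonempty) :
    O₁ ((Finset.univ.filter fun e => O₁ e ≠ O₂ e).min' hne)
      = some (A ((Finset.univ.filter fun e => O₁ e ≠ O₂ e).min' hne)) := by
  set D := Finset.univ.filter fun e => O₁ e ≠ O₂ e with hD
  set e₀ := D.min' hne with he₀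
  obtain ⟨L, hL1, hL2, hL3⟩ := part1 G O₁ O₂ h
  have he₀D : e₀ ∈ D := D.min'_mem hne
  have hdiff : O₁ e₀ ≠ O₂ e₀ := (Finset.mem_filter.mp he₀D).2
  obtain ⟨c, hcL, he₀c⟩ := (hL3 e₀).mp hdiff
  have hdc := hL1 c hcL
  obtain ⟨s, hs, hsle, hsA⟩ := hmin c hdc
  have hs1D : s.1 ∈ D := by
    rw [hD, Finset.mem_filter]
    exact ⟨Finset.mem_univ _, (hL3 s.1).mpr ⟨c, hcL, List.mem_map_of_mem (f := Prod.fst) hs⟩⟩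
  have h1 : e₀ ≤ s.1 := D.min'_le _ hs1D
  obtain ⟨b, hb⟩ := (mem_map_fst G).mp he₀c
  have h2 : s.1 ≤ e₀ := hsle (e₀, b) hb
  have hse : s.1 = e₀ := le_antisymm h2 h1
  have hval := hdc.2.1 s hs
  rw [hse] at hval
  rw [hval, hsA, hse]

lemma unique_min (A : G.E → Bool) {O O₁ O₂ : G.PartialOrientation}
    (h1 : Relation.ReflTransGen G.cycleRev O O₁)
    (h2 : Relation.ReflTransGen G.cycleRev O O₂)
    (hm1 : G.CycleMinimal A O₁) (hm2 : G.CycleMinimal A O₂) : O₁ = O₂ := by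
  have hsymm : Symmetric G.cycleRev := fun a b h => cycleRev_symm G h
  have hsym' : ∀ {a b}, Relation.ReflTransGen G.cycleRev a b → Relation.ReflTransGen G.cycleRev b a :=
    fun h => by haveI : Std.Symm G.cycleRev := ⟨hsymm⟩; exact (Relation.ReflTransGen.symmetric).symm _ _ h
  have h12 : Relation.ReflTransGen G.cycleRev O₁ O₂ := (hsym' h1).trans h2
  have h21 : Relation.ReflTransGen G.cycleRev O₂ O₁ := (hsym' h2).trans h1
  by_contra hne
  have hex : ∃ e, O₁ e ≠ O₂ e := Function.ne_iff.mp hne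
  have hne1 : (Finset.univ.filter fun e => O₁ e ≠ O₂ e).Nonempty := by
    obtain ⟨e, he⟩ := hex
    exact ⟨e, Finset.mem_filter.mpr ⟨Finset.mem_univ e, he⟩⟩
  have hsets : (Finset.univ.filter fun e => O₂ e ≠ O₁ e)
      = (Finset.univ.filter fun e => O₁ e ≠ O₂ e) := by
    apply Finset.filter_congr
    intro e _
    exact ⟨Ne.symm, Ne.symm⟩
  have hne2 : (Finset.univ.filter fun e => O₂ e ≠ O₁ e).Nonempty := by
    rw [hsets]; exact hne1
  have v1 := min_diff_val G A h12 hm1 hne1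
  have v2 := min_diff_val G A h21 hm2 hne2
  have hmins : (Finset.univ.filter fun e => O₂ e ≠ O₁ e).min' hne2
      = (Finset.univ.filter fun e => O₁ e ≠ O₂ e).min' hne1 := by
    congr 1
  rw [hmins] at v2
  set e₀ := (Finset.univ.filter fun e => O₁ e ≠ O₂ e).min' hne1
  have : O₁ e₀ ≠ O₂ e₀ := (Finset.mem_filter.mp
    ((Finset.univ.filter fun e => O₁ e ≠ O₂ e).min'_mem hne1)).2
  rw [v1, v2] at this
  exact this rfl

end Minimal

end Stmt8Aux

/-- partial orientations related by directed cycle reversals differ on an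
edge-disjoint union of directed cycles of the first; consequently every partial
orientation is equivalent via cycle reversals to a unique cycle minimal one. -/
theorem stmt8 (G : Multigraph) [LinearOrder G.E] (A : G.E → Bool) :
    (∀ O O' : G.PartialOrientation, (∀ e, O e = none ↔ O' e = none) →
      Relation.ReflTransGen G.cycleRev O O' →
      ∃ L : List (List (G.E × Bool)), (∀ c ∈ L, G.IsDCycle O c) ∧
        L.Pairwise (fun c d => ∀ e, e ∈ c.map Prod.fst → e ∉ d.map Prod.fst) ∧
        ∀ e, (O e ≠ O' e ↔ ∃ c ∈ L, e ∈ c.map Prod.fst)) ∧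
    (∀ O : G.PartialOrientation,
      ∃! O', Relation.ReflTransGen G.cycleRev O O' ∧ G.CycleMinimal A O') := by
  constructor
  · intro O O' _ h
    exact Stmt8Aux.part1 G O O' h
  · intro O
    obtain ⟨O', hr, hm⟩ := Stmt8Aux.exists_min G A (Stmt8Aux.phi G A O) O le_rfl
    refine ⟨O', ⟨hr, hm⟩, ?_⟩
    rintro y ⟨hy1, hy2⟩
    exact Stmt8Aux.unique_min G A hy1 hr hy2 hm
end
end

section
/- Every partial orientation of a connected multigraph is equivalent via directed cycle reversals and directed cut reversals to a unique partial orientation that is simultaneously cycle minimal and cut minimal (with respect to a fixed pair (<, A)). -/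
open Classical

noncomputable section

namespace Multigraph

variable {G : Multigraph}

@[simp] lemma dhead_not (e : G.E) (b : Bool) : G.dhead e (!b) = G.dtail e b := by
  cases b <;> simp [dhead, dtail]

@[simp] lemma dtail_not (e : G.E) (b : Bool) : G.dtail e (!b) = G.dhead e b := by
  cases b <;> simp [dhead, dtail]

/-- The step relation: head of one step is tail of the next. -/
def stepRel (G : Multigraph) (s t : G.E × Bool) : Prop :=
  G.dhead s.1 s.2 = G.dtail t.1 t.2

/-- head of a step -/
def hdS (G : Multigraph) (s : G.E × Bool) : G.V := G.dhead s.1 s.2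
/-- tail of a step -/
def tlS (G : Multigraph) (s : G.E × Bool) : G.V := G.dtail s.1 s.2

lemma closed_iff {c : List (G.E × Bool)} (h : c ≠ []) :
    List.Chain' G.stepRel (c ++ c.take 1) ↔
      List.Chain' G.stepRel c ∧ G.stepRel (c.getLast h) (c.head h) := by
  obtain ⟨a, t, rfl⟩ := List.exists_cons_of_ne_nil h
  unfold List.Chain'
  rw [List.isChain_append]
  simp [List.getLast?_eq_getLast h]

lemma chain'_map_hd : ∀ (t : List (G.E × Bool)) (a : G.E × Bool),
    List.Chain' G.stepRel (a :: t) →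
    (a :: t).map G.hdS = t.map G.tlS ++ [G.hdS ((a :: t).getLast (by simp))]
  | [], a, _ => by simp
  | b :: t, a, h => by
    have h1 : G.stepRel a b := (List.isChain_cons_cons.mp h).1
    have h2 := chain'_map_hd t b (List.isChain_cons_cons.mp h).2
    simp only [List.map_cons] at h2 ⊢
    rw [List.getLast_cons (by simp)]
    rw [show G.hdS a = G.tlS b from h1]
    simp only [List.cons_append]
    exact congrArg (List.cons (G.tlS b)) h2

lemma heads_perm_tails {c : List (G.E × Bool)} (hne : c ≠ [])
    (hch : List.Chain' G.stepRel c) (hcl : G.stepRel (c.getLast hne) (c.head hne)) :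
    (c.map G.hdS).Perm (c.map G.tlS) := by
  obtain ⟨a, t, rfl⟩ := List.exists_cons_of_ne_nil hne
  rw [chain'_map_hd t a hch]
  have : G.hdS ((a :: t).getLast (by simp)) = G.tlS a := hcl
  rw [this]
  simpa using List.perm_append_singleton _ _

lemma list_sum_sub {α : Type*} (f g : α → ℤ) (l : List α) :
    (l.map (fun s => f s - g s)).sum = (l.map f).sum - (l.map g).sum := by
  induction l with
  | nil => simp
  | cons a t ih => simp [ih]; ring

lemma cycle_flux {c : List (G.E × Bool)} (hne : c ≠ [])
    (hch : List.Chain' G.stepRel c) (hcl : G.stepRel (c.getLast hne) (c.head hne))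
    (ψ : G.V → ℤ) :
    (c.map (fun s => ψ (G.hdS s) - ψ (G.tlS s))).sum = 0 := by
  have hperm := (heads_perm_tails hne hch hcl).map ψ
  have hsum := hperm.sum_eq
  rw [list_sum_sub (fun s => ψ (G.hdS s)) (fun s => ψ (G.tlS s)) c]
  rw [show c.map (fun s => ψ (G.hdS s)) = (c.map G.hdS).map ψ by simp,
     show c.map (fun s => ψ (G.tlS s)) = (c.map G.tlS).map ψ by simp, hsum, sub_self]

/-- unpack an `IsDCycle` into its pieces -/
lemma IsDCycle.parts {O : G.PartialOrientation} {c : List (G.E × Bool)}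
    (h : G.IsDCycle O c) :
    ∃ hne : c ≠ [], List.Chain' G.stepRel c ∧ G.stepRel (c.getLast hne) (c.head hne) := by
  obtain ⟨hne, -, hch, -⟩ := h
  exact ⟨hne, (closed_iff hne).mp hch⟩


lemma crosses_compl {X : Set G.V} {e : G.E} : G.crosses Xᶜ e ↔ G.crosses X e := by
  unfold crosses; simp only [Set.mem_compl_iff]; tauto

lemma crossing_some {O : G.PartialOrientation} {X : Set G.V} (hX : G.IsDirCut O X)
    {e : G.E} (hc : G.crosses X e) : ∃ b, O e = some b := by
  obtain ⟨h3, h4⟩ := hX.2 e hc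
  unfold crosses at hc
  by_cases h : G.fst e ∈ X
  · exact ⟨true, h3 h⟩
  · exact ⟨false, h4 (by tauto)⟩

lemma dircut_step {O : G.PartialOrientation} {X : Set G.V} (hX : G.IsDirCut O X)
    {e : G.E} (hc : G.crosses X e) {b : Bool} (hb : O e = some b) :
    G.dtail e b ∈ X ∧ G.dhead e b ∉ X := by
  obtain ⟨h3, h4⟩ := hX.2 e hc
  unfold crosses at hc
  cases b
  · have hfst : G.fst e ∉ X := fun h => by simp [h3 h] at hb
    have hsnd : G.snd e ∈ X := by tauto
    simp [dtail, dhead, hsnd, hfst]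
  · have hsnd : G.snd e ∉ X := fun h => by simp [h4 h] at hb
    have hfst : G.fst e ∈ X := by tauto
    simp [dtail, dhead, hfst, hsnd]

/-- Edges of a directed cycle never cross a directed cut. -/
lemma not_crosses_of_mem_cycle {O : G.PartialOrientation} {X : Set G.V}
    (hX : G.IsDirCut O X) {c : List (G.E × Bool)} (hc : G.IsDCycle O c)
    {s : G.E × Bool} (hs : s ∈ c) : ¬ G.crosses X s.1 := by
  intro hcr
  obtain ⟨hne, hch, hcl⟩ := hc.parts
  have hor := hc.2.1
  set ψ : G.V → ℤ := fun v => if v ∈ X then 1 else 0 with hψ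
  set l : List ℤ := c.map (fun t => ψ (G.tlS t) - ψ (G.hdS t)) with hl
  have hsum : l.sum = 0 := by
    have h0 := cycle_flux hne hch hcl ψ
    rw [list_sum_sub] at h0 ⊢
    omega
  have hterm : ∀ t ∈ c, ψ (G.tlS t) - ψ (G.hdS t) =
      (if G.crosses X t.1 then 1 else 0) := by
    rintro ⟨e, b⟩ ht
    unfold Multigraph.tlS Multigraph.hdS
    by_cases hcrt : G.crosses X (e, b).1
    · obtain ⟨h1, h2⟩ := dircut_step hX hcrt (hor _ ht)
      simp only [hψ] at *
      simp [h1, h2, hcrt]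
    · have hiff : (G.dtail e b ∈ X) ↔ (G.dhead e b ∈ X) := by
        unfold crosses at hcrt
        cases b <;> simp [dtail, dhead] <;> tauto
      rw [if_neg hcrt]
      by_cases hh : G.dtail (e, b).1 (e, b).2 ∈ X
      · simp only [hψ]
        simp at hh
        simp [hh, hiff.mp hh]
      · have hh2 : G.dhead e b ∉ X := by simp at hh; exact fun h => hh (hiff.mpr h)
        simp only [hψ]
        simp at hh
        simp [hh, hh2]
  have hnonneg : ∀ x ∈ l, (0:ℤ) ≤ x := by
    intro x hx
    obtain ⟨t, ht, rfl⟩ := List.mem_map.mp hx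
    rw [hterm t ht]
    split <;> omega
  have hmem : (1:ℤ) ∈ l := by
    refine List.mem_map.mpr ⟨s, hs, ?_⟩
    rw [hterm s hs, if_pos hcr]
  have := List.single_le_sum hnonneg 1 hmem
  omega

lemma isDirCut_compl {O O' : G.PartialOrientation} {X : Set G.V} (hX : G.IsDirCut O X)
    (hrev : ∀ e, G.crosses X e → O' e = (O e).map not) : G.IsDirCut O' Xᶜ := by
  obtain ⟨⟨e0, he0⟩, h2⟩ := hX
  refine ⟨⟨e0, crosses_compl.mpr he0⟩, ?_⟩
  intro e hce
  have hcx : G.crosses X e := crosses_compl.mp hce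
  obtain ⟨h3, h4⟩ := h2 e hcx
  have hcx' := hcx
  unfold crosses at hcx'
  constructor
  · intro hfst
    have hsnd : G.snd e ∈ X := by simp only [Set.mem_compl_iff] at hfst; tauto
    rw [hrev e hcx, h4 hsnd]; rfl
  · intro hsnd
    have hfst : G.fst e ∈ X := by simp only [Set.mem_compl_iff] at hsnd; tauto
    rw [hrev e hcx, h3 hfst]; rfl

lemma cutRev_symm {O O' : G.PartialOrientation} (h : G.cutRev O O') : G.cutRev O' O := by
  obtain ⟨X, hX, hsame, hrev⟩ := h
  refine ⟨Xᶜ, isDirCut_compl hX hrev, ?_, ?_⟩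
  · intro e he
    exact (hsame e (fun hc => he (crosses_compl.mpr hc))).symm
  · intro e he
    have hcx : G.crosses X e := crosses_compl.mp he
    obtain ⟨b, hb⟩ := crossing_some hX hcx
    rw [hrev e hcx, hb]
    simp

lemma chain'_revneg {c : List (G.E × Bool)} :
    List.Chain' G.stepRel ((c.map (fun s => (s.1, !s.2))).reverse) ↔
      List.Chain' G.stepRel c := by
  unfold List.Chain'
  rw [List.isChain_reverse, List.isChain_map]
  constructor <;> intro h
  · refine List.IsChain.imp ?_ h
    intro a b hab
    simp only [Multigraph.stepRel, flip, dhead_not, dtail_not] at hab ⊢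
    exact hab.symm
  · refine List.IsChain.imp ?_ h
    intro a b hab
    simp only [Multigraph.stepRel, flip, dhead_not, dtail_not] at hab ⊢
    exact hab.symm

lemma isDCycle_revneg {O O' : G.PartialOrientation} {c : List (G.E × Bool)}
    (hc : G.IsDCycle O c) (h2 : ∀ s ∈ c, O' s.1 = some (!s.2)) :
    G.IsDCycle O' ((c.map (fun s => (s.1, !s.2))).reverse) := by
  obtain ⟨hne, hch, hcl⟩ := hc.parts
  set c' := (c.map (fun s => (s.1, !s.2))).reverse with hc'
  have hne' : c' ≠ [] := by simp [hc', hne]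
  refine ⟨hne', ?_, ?_, ?_⟩
  · intro s hs
    rw [hc'] at hs
    obtain ⟨t, ht, rfl⟩ := List.mem_map.mp (List.mem_reverse.mp hs)
    exact h2 t ht
  · show List.Chain' G.stepRel (c' ++ c'.take 1)
    rw [closed_iff hne']
    constructor
    · exact chain'_revneg.mpr hch
    · have hhead : c'.head hne' = (fun s => (s.1, !s.2)) (c.getLast hne) := by
        have h1 : c'.head? = some ((fun s => (s.1, !s.2)) (c.getLast hne)) := by
          rw [hc', List.head?_reverse, List.getLast?_map, List.getLast?_eq_getLast hne]
          rfl
        rw [List.head?_eq_head hne'] at h1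
        exact Option.some_injective _ h1
      have hlast : c'.getLast hne' = (fun s => (s.1, !s.2)) (c.head hne) := by
        have h1 : c'.getLast? = some ((fun s => (s.1, !s.2)) (c.head hne)) := by
          rw [hc', List.getLast?_reverse, List.head?_map, List.head?_eq_head hne]
          rfl
        rw [List.getLast?_eq_getLast hne'] at h1
        exact Option.some_injective _ h1
      rw [hhead, hlast]
      unfold stepRel at hcl ⊢
      simpa using hcl.symm
  · have : c'.map Prod.fst = (c.map Prod.fst).reverse := by
      rw [hc', List.map_reverse, List.map_map]
      rfl
    rw [this, List.nodup_reverse]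
    exact hc.2.2.2

lemma cycleRev_symm {O O' : G.PartialOrientation} (h : G.cycleRev O O') : G.cycleRev O' O := by
  obtain ⟨c, hc, hsame, hrev⟩ := h
  refine ⟨(c.map (fun s => (s.1, !s.2))).reverse, isDCycle_revneg hc hrev, ?_, ?_⟩
  · intro e he
    have he' : e ∉ c.map Prod.fst := by
      intro hmem
      apply he
      rw [List.map_reverse, List.map_map]
      exact List.mem_reverse.mpr hmem
    exact (hsame e he').symm
  · intro s hs
    obtain ⟨t, ht, rfl⟩ := List.mem_map.mp (List.mem_reverse.mp hs)
    simpa using hc.2.1 t ht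


/-- Edges lying on some directed cycle. -/
def CycE (G : Multigraph) (O : G.PartialOrientation) : Set G.E :=
  {e | ∃ c, G.IsDCycle O c ∧ e ∈ c.map Prod.fst}

/-- Edges crossing some directed cut. -/
def CutE (G : Multigraph) (O : G.PartialOrientation) : Set G.E :=
  {e | ∃ X, G.IsDirCut O X ∧ G.crosses X e}

lemma cycE_cutE_disjoint {O : G.PartialOrientation} {e : G.E}
    (h1 : e ∈ G.CycE O) (h2 : e ∈ G.CutE O) : False := by
  obtain ⟨c, hc, he⟩ := h1
  obtain ⟨X, hX, hcr⟩ := h2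
  obtain ⟨s, hs, rfl⟩ := List.mem_map.mp he
  exact not_crosses_of_mem_cycle hX hc hs hcr

/-- The direction of an oriented edge (default `true`). -/
def dirO (G : Multigraph) (O : G.PartialOrientation) (e : G.E) : Bool := (O e).getD true

lemma dirO_eq {O : G.PartialOrientation} {e : G.E} {b : Bool} (h : O e = some b) :
    G.dirO O e = b := by simp [dirO, h]

/-- Conservation of a set of oriented edges. -/
def Cons (G : Multigraph) (O : G.PartialOrientation) (F : Finset G.E) : Prop :=
  ∀ ψ : G.V → ℤ,
    (∑ e ∈ F, (ψ (G.dhead e (G.dirO O e)) - ψ (G.dtail e (G.dirO O e)))) = 0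

lemma toFinset_sum_cycle {c : List (G.E × Bool)} (hnd : (c.map Prod.fst).Nodup)
    (φ : G.E → ℤ) :
    (∑ e ∈ (c.map Prod.fst).toFinset, φ e) = (c.map (fun s => φ s.1)).sum := by
  rw [List.sum_toFinset φ hnd, List.map_map]
  rfl

lemma cons_out {O : G.PartialOrientation} {F : Finset G.E} (hcons : G.Cons O F)
    {e : G.E} (he : e ∈ F) :
    ∃ e' ∈ F, G.dtail e' (G.dirO O e') = G.dhead e (G.dirO O e) := by
  by_contra hno
  push_neg at hno
  set ψ : G.V → ℤ := fun v => if v = G.dhead e (G.dirO O e) then 1 else 0 with hψ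
  have h0 := hcons ψ
  rw [Finset.sum_sub_distrib] at h0
  have htl : (∑ e' ∈ F, ψ (G.dtail e' (G.dirO O e'))) = 0 := by
    apply Finset.sum_eq_zero
    intro e' he'
    simp [hψ, hno e' he']
  have hhd : (1:ℤ) ≤ ∑ e' ∈ F, ψ (G.dhead e' (G.dirO O e')) := by
    have h1 : ψ (G.dhead e (G.dirO O e)) = 1 := by simp [hψ]
    calc (1:ℤ) = ψ (G.dhead e (G.dirO O e)) := h1.symm
    _ ≤ _ := Finset.single_le_sum (f := fun e' => ψ (G.dhead e' (G.dirO O e')))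
        (fun i _ => by simp only [hψ]; split <;> omega) he
  omega

/-- From a closed walk, extract a directed cycle with distinct edges. -/
lemma dedupe {O : G.PartialOrientation} {F : Finset G.E}
    (hor : ∀ e ∈ F, O e = some (G.dirO O e)) :
    ∀ n (w : List (G.E × Bool)), w.length ≤ n → ∀ hne : w ≠ [],
    (∀ s ∈ w, s.1 ∈ F ∧ s.2 = G.dirO O s.1) →
    List.Chain' G.stepRel w → G.stepRel (w.getLast hne) (w.head hne) →
    ∃ c, G.IsDCycle O c ∧ ∀ s ∈ c, s.1 ∈ F ∧ s.2 = G.dirO O s.1 := by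
  intro n
  induction n with
  | zero =>
    intro w hlen hne _ _ _
    exact absurd (List.length_eq_zero_iff.mp (by omega)) hne
  | succ n ih =>
    intro w hlen hne hw hch hcl
    by_cases hnd : (w.map Prod.fst).Nodup
    · refine ⟨w, ⟨hne, ?_, ?_, hnd⟩, hw⟩
      · intro s hs
        rw [(hw s hs).2]
        exact hor _ (hw s hs).1
      · exact (closed_iff hne).mpr ⟨hch, hcl⟩
    · rw [List.nodup_iff_injective_get] at hnd
      obtain ⟨a, b, hab, hne2⟩ := Function.not_injective_iff.mp hnd
      have hlm : (w.map Prod.fst).length = w.length := by simp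
      have key : ∃ i j, ∃ (hi : i < w.length) (hj : j < w.length), i < j ∧
          (w[i]'hi).1 = (w[j]'hj).1 := by
        have hget : ∀ (k : Fin (w.map Prod.fst).length),
            (w.map Prod.fst).get k = (w[k.1]'(by omega)).1 := by
          intro k
          simp [List.get_eq_getElem]
        have hne3 : a.1 ≠ b.1 := fun h => hne2 (Fin.ext h)
        rcases Nat.lt_or_ge a.1 b.1 with h | h
        · exact ⟨a.1, b.1, by omega, by omega, h, by rw [← hget a, ← hget b, hab]⟩
        · have h' : b.1 < a.1 := by omega
          exact ⟨b.1, a.1, by omega, by omega, h', by rw [← hget a, ← hget b, hab]⟩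
      obtain ⟨i, j, hi, hj, hij, hfst⟩ := key
      have hsteps : w[i]'hi = w[j]'hj := by
        have h2 := (hw _ (List.getElem_mem hi)).2
        have h3 := (hw _ (List.getElem_mem hj)).2
        exact Prod.ext hfst (by rw [h2, h3, hfst])
      set c₀ : List (G.E × Bool) := (w.drop i).take (j - i) with hc₀
      have lc0 : c₀.length = j - i := by
        simp [hc₀]
        omega
      have hgc0 : ∀ k (hk : k < c₀.length), c₀[k]'hk = w[i+k]'(by omega) := by
        intro k hk
        simp [hc₀, List.getElem_take, List.getElem_drop]
      have hne0 : c₀ ≠ [] := by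
        intro h
        rw [h] at lc0
        simp at lc0
        omega
      have hinf : c₀ <:+: w :=
        (List.take_prefix _ _).isInfix.trans (List.drop_suffix i w).isInfix
      have hmem : ∀ s ∈ c₀, s ∈ w := fun s hs => hinf.subset hs
      have hch0 : List.Chain' G.stepRel c₀ := hch.infix hinf
      have hw' : ∀ (k : ℕ) (h : k < w.length - 1),
          G.stepRel (w[k]'(by omega)) (w[k+1]'(by omega)) := by
        have := List.isChain_iff_getElem.mp hch
        intro k h
        simpa [List.get_eq_getElem] using this k (by omega)
      have hcl0 : G.stepRel (c₀.getLast hne0) (c₀.head hne0) := by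
        have h1 : c₀.getLast hne0 = w[j-1]'(by omega) := by
          rw [List.getLast_eq_getElem hne0, hgc0 _ (by omega)]
          congr 1
          omega
        have h2 : c₀.head hne0 = w[i]'hi := by
          rw [List.head_eq_getElem hne0, hgc0 _ (by omega)]
          simp
        rw [h1, h2, hsteps]
        have h3 := hw' (j-1) (by omega)
        have h4 : j - 1 + 1 = j := by omega
        convert h3 using 2
        omega
      exact ih c₀ (by omega) hne0 (fun s hs => hw s (hmem s hs)) hch0 hcl0

lemma exists_cycle_of_cons {O : G.PartialOrientation} {F : Finset G.E}
    (hor : ∀ e ∈ F, O e = some (G.dirO O e)) (hcons : G.Cons O F)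
    {e0 : G.E} (he0 : e0 ∈ F) :
    ∃ c, G.IsDCycle O c ∧ (∀ s ∈ c, s.1 ∈ F ∧ s.2 = G.dirO O s.1) := by
  have hsucc : ∀ p : {e // e ∈ F}, ∃ q : {e // e ∈ F},
      G.dtail q.1 (G.dirO O q.1) = G.dhead p.1 (G.dirO O p.1) := by
    intro p
    obtain ⟨e', he', heq⟩ := cons_out hcons p.2
    exact ⟨⟨e', he'⟩, heq⟩
  choose nxt hnxt using hsucc
  set f : ℕ → {e // e ∈ F} := fun n => Nat.rec ⟨e0, he0⟩ (fun _ p => nxt p) n with hfdef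
  have hf : ∀ n, G.dtail (f (n+1)).1 (G.dirO O (f (n+1)).1)
      = G.dhead (f n).1 (G.dirO O (f n).1) := fun n => hnxt (f n)
  obtain ⟨x, y, hxy, hfeq⟩ := Fintype.exists_ne_map_eq_of_card_lt
    (fun k : Fin (Fintype.card {e // e ∈ F} + 1) => f k.1) (by simp)
  have key : ∃ i j, i < j ∧ f i = f j := by
    have : x.1 ≠ y.1 := fun h => hxy (Fin.ext h)
    rcases Nat.lt_or_ge x.1 y.1 with h | h
    · exact ⟨x.1, y.1, h, hfeq⟩
    · exact ⟨y.1, x.1, by omega, hfeq.symm⟩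
  obtain ⟨i, j, hij, hfij⟩ := key
  set g : ℕ → G.E × Bool := fun k => ((f (i+k)).1, G.dirO O (f (i+k)).1) with hgdef
  set w : List (G.E × Bool) := (List.range (j - i)).map g with hwdef
  have hlw : w.length = j - i := by simp [hwdef]
  have hne : w ≠ [] := by
    intro h
    rw [h] at hlw
    simp at hlw
    omega
  have hgw : ∀ k (hk : k < w.length), w[k]'hk = g k := by
    intro k hk
    simp [hwdef]
  have hmemw : ∀ s ∈ w, s.1 ∈ F ∧ s.2 = G.dirO O s.1 := by
    intro s hs
    rw [hwdef] at hs
    obtain ⟨k, _, rfl⟩ := List.mem_map.mp hs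
    exact ⟨(f (i+k)).2, rfl⟩
  have hch : List.Chain' G.stepRel w := by
    unfold List.Chain'
    rw [List.isChain_iff_getElem]
    intro k hk
    rw [hgw k (by omega), hgw (k+1) (by omega)]
    show G.dhead (g k).1 (g k).2 = G.dtail (g (k+1)).1 (g (k+1)).2
    simp only [hgdef]
    rw [show i + (k+1) = (i+k) + 1 by omega, hf (i+k)]
  have hcl : G.stepRel (w.getLast hne) (w.head hne) := by
    rw [List.getLast_eq_getElem hne, List.head_eq_getElem hne,
      hgw _ (by omega), hgw 0 (by omega)]
    show G.dhead (g (w.length - 1)).1 (g (w.length - 1)).2 = G.dtail (g 0).1 (g 0).2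
    simp only [hgdef]
    have h1 : i + (w.length - 1) = j - 1 := by omega
    have h2 : i + 0 = i := by omega
    have h3 := hf (j-1)
    rw [show j - 1 + 1 = j by omega] at h3
    rw [h1, h2, hfij]
    exact h3.symm
  exact dedupe hor w.length w le_rfl hne hmemw hch hcl

lemma exists_cycle_through {O : G.PartialOrientation} :
    ∀ n (F : Finset G.E), F.card ≤ n →
    (∀ e ∈ F, O e = some (G.dirO O e)) → G.Cons O F →
    ∀ e0 ∈ F, ∃ c, G.IsDCycle O c ∧ e0 ∈ c.map Prod.fst ∧
      (∀ s ∈ c, s.1 ∈ F ∧ s.2 = G.dirO O s.1) := by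
  intro n
  induction n with
  | zero =>
    intro F hcard _ _ e0 he0
    have := Finset.card_pos.mpr ⟨e0, he0⟩
    omega
  | succ n ih =>
    intro F hcard hor hcons e0 he0
    obtain ⟨c, hc, hcF⟩ := exists_cycle_of_cons hor hcons he0
    by_cases he : e0 ∈ c.map Prod.fst
    · exact ⟨c, hc, he, hcF⟩
    · set cE := (c.map Prod.fst).toFinset with hcE
      have hsub : cE ⊆ F := by
        intro e he'
        rw [hcE, List.mem_toFinset] at he'
        obtain ⟨s, hs, rfl⟩ := List.mem_map.mp he'
        exact (hcF s hs).1
      have hconsc : ∀ ψ : G.V → ℤ,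
          (∑ e ∈ cE, (ψ (G.dhead e (G.dirO O e)) - ψ (G.dtail e (G.dirO O e)))) = 0 := by
        intro ψ
        rw [hcE, toFinset_sum_cycle hc.2.2.2]
        have heq : c.map (fun s => ψ (G.dhead s.1 (G.dirO O s.1)) - ψ (G.dtail s.1 (G.dirO O s.1)))
            = c.map (fun s => ψ (G.hdS s) - ψ (G.tlS s)) := by
          apply List.map_congr_left
          intro s hs
          rw [← (hcF s hs).2]
          rfl
        rw [heq]
        obtain ⟨hne, hch, hcl⟩ := hc.parts
        exact cycle_flux hne hch hcl ψ
      have hcons' : G.Cons O (F \ cE) := by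
        intro ψ
        rw [Finset.sum_sdiff_eq_sub hsub, hcons ψ, hconsc ψ, sub_zero]
      have hcne : cE.Nonempty := by
        obtain ⟨hne, -, -⟩ := hc.parts
        exact ⟨(c.head hne).1, by
          rw [hcE, List.mem_toFinset]
          exact List.mem_map.mpr ⟨c.head hne, List.head_mem hne, rfl⟩⟩
      have hcard' : (F \ cE).card ≤ n := by
        have h1 := Finset.card_sdiff_of_subset hsub
        have h2 := Finset.card_pos.mpr hcne
        omega
      have he0' : e0 ∈ F \ cE := Finset.mem_sdiff.mpr ⟨he0, by
        rw [hcE, List.mem_toFinset]; exact he⟩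
      obtain ⟨c', hc', he0'', hcF'⟩ := ih (F \ cE) hcard'
        (fun e he' => hor e (Finset.mem_sdiff.mp he').1) hcons' e0 he0'
      exact ⟨c', hc', he0'', fun s hs =>
        ⟨(Finset.mem_sdiff.mp (hcF' s hs).1).1, (hcF' s hs).2⟩⟩

lemma crosses_of_sides {X : Set G.V} {e : G.E} {b : Bool}
    (h1 : G.dtail e b ∈ X) (h2 : G.dhead e b ∉ X) : G.crosses X e := by
  unfold crosses
  cases b <;> simp [dtail, dhead] at h1 h2 <;> tauto

/-- Threshold construction: extract a directed cut from an integer potential. -/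
lemma exists_cut_of_potential {O : G.PartialOrientation} {K : Set G.E} {φ : G.V → ℤ}
    (hK : ∀ e ∈ K, O e = some (G.dirO O e) ∧
      φ (G.dhead e (G.dirO O e)) = φ (G.dtail e (G.dirO O e)) + 1)
    (hnK : ∀ e ∉ K, φ (G.fst e) = φ (G.snd e))
    {e0 : G.E} (he0 : e0 ∈ K) :
    ∃ X, G.IsDirCut O X ∧ G.crosses X e0 ∧ ∀ e, G.crosses X e → e ∈ K := by
  set t : ℤ := φ (G.dhead e0 (G.dirO O e0)) with ht
  set X : Set G.V := {v | φ v < t} with hX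
  have hXmem : ∀ v, v ∈ X ↔ φ v < t := fun v => Iff.rfl
  have hcr0 : G.crosses X e0 := by
    apply crosses_of_sides (b := G.dirO O e0)
    · rw [hXmem]
      have := (hK e0 he0).2
      omega
    · rw [hXmem]
      omega
  have hKmem : ∀ e, G.crosses X e → e ∈ K := by
    intro e hcr
    by_contra hK'
    have heq := hnK e hK'
    unfold crosses at hcr
    rw [hXmem, hXmem, heq] at hcr
    tauto
  have hsides : ∀ e, G.crosses X e →
      G.dtail e (G.dirO O e) ∈ X ∧ G.dhead e (G.dirO O e) ∉ X := by
    intro e hcr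
    have he := hKmem e hcr
    obtain ⟨hor, hpot⟩ := hK e he
    have hone : ¬ ((G.dtail e (G.dirO O e) ∈ X) ↔ (G.dhead e (G.dirO O e) ∈ X)) := by
      unfold crosses at hcr
      cases hb : G.dirO O e <;> simp [dtail, dhead, hb] at * <;> tauto
    rw [hXmem, hXmem] at hone
    constructor
    · rw [hXmem]; omega
    · rw [hXmem]; omega
  refine ⟨X, ⟨⟨e0, hcr0⟩, ?_⟩, hcr0, hKmem⟩
  intro e hcr
  obtain ⟨h1, h2⟩ := hsides e hcr
  have hor := (hK e (hKmem e hcr)).1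
  constructor
  · intro hfst
    cases hb : G.dirO O e
    · rw [hb] at h1 h2
      simp [dtail, dhead] at h1 h2
      exact absurd hfst h2
    · rw [hb] at hor
      exact hor
  · intro hsnd
    cases hb : G.dirO O e
    · rw [hb] at hor
      exact hor
    · rw [hb] at h1 h2
      simp [dtail, dhead] at h1 h2
      exact absurd hsnd h2

lemma cycle_cons {O : G.PartialOrientation} {c : List (G.E × Bool)} (hc : G.IsDCycle O c)
    (ψ : G.V → ℤ) :
    (∑ e ∈ (c.map Prod.fst).toFinset,
      (ψ (G.dhead e (G.dirO O e)) - ψ (G.dtail e (G.dirO O e)))) = 0 := by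
  rw [toFinset_sum_cycle hc.2.2.2]
  have heq : c.map (fun s => ψ (G.dhead s.1 (G.dirO O s.1)) - ψ (G.dtail s.1 (G.dirO O s.1)))
      = c.map (fun s => ψ (G.hdS s) - ψ (G.tlS s)) := by
    apply List.map_congr_left
    intro s hs
    rw [dirO_eq (hc.2.1 s hs)]
    rfl
  rw [heq]
  obtain ⟨hne, hch, hcl⟩ := hc.parts
  exact cycle_flux hne hch hcl ψ

lemma cycE_sub_of_cutRev {O O' : G.PartialOrientation} (h : G.cutRev O O') :
    G.CycE O ⊆ G.CycE O' := by
  obtain ⟨X, hX, hsame, hrev⟩ := h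
  rintro e ⟨c, hc, he⟩
  refine ⟨c, ⟨hc.1, ?_, hc.2.2.1, hc.2.2.2⟩, he⟩
  intro s hs
  rw [hsame s.1 (not_crosses_of_mem_cycle hX hc hs)]
  exact hc.2.1 s hs

lemma cutE_sub_of_cycleRev {O O' : G.PartialOrientation} (h : G.cycleRev O O') :
    G.CutE O ⊆ G.CutE O' := by
  obtain ⟨d, hd, hsame, hrev⟩ := h
  rintro e ⟨X, hX, hcr⟩
  refine ⟨X, ⟨hX.1, ?_⟩, hcr⟩
  intro f hf
  have hfd : f ∉ d.map Prod.fst := by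
    intro hmem
    obtain ⟨s, hs, rfl⟩ := List.mem_map.mp hmem
    exact not_crosses_of_mem_cycle hX hd hs hf
  rw [hsame f hfd]
  exact hX.2 f hf

lemma cutE_sub_of_cutRev {O O' : G.PartialOrientation} (h : G.cutRev O O') :
    G.CutE O ⊆ G.CutE O' := by
  obtain ⟨Y, hY, hsame, hrev⟩ := h
  rintro e ⟨X, hX, hcr⟩
  by_cases hcY : G.crosses Y e
  · exact ⟨Yᶜ, isDirCut_compl hY hrev, crosses_compl.mpr hcY⟩
  · set φ : G.V → ℤ := fun v => (if v ∈ X then 0 else 1) + (if v ∈ Y then 1 else 0) with hφ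
    set K : Set G.E := {f | (G.crosses X f ∧ ¬ G.crosses Y f) ∨
      (G.crosses Y f ∧ ¬ G.crosses X f)} with hKdef
    have hXstep : ∀ f, G.crosses X f → ∀ b, O f = some b →
        G.dtail f b ∈ X ∧ G.dhead f b ∉ X := fun f hf b hb => dircut_step hX hf hb
    have hYstep : ∀ f, G.crosses Y f → ∀ b, O f = some b →
        G.dtail f b ∈ Y ∧ G.dhead f b ∉ Y := fun f hf b hb => dircut_step hY hf hb
    have hnocross : ∀ (Z : Set G.V) f, ¬ G.crosses Z f → ∀ b : Bool,
        ((G.dtail f b ∈ Z) ↔ (G.dhead f b ∈ Z)) := by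
      intro Z f hf b
      unfold crosses at hf
      cases b <;> simp [dtail, dhead] <;> tauto
    have hK : ∀ f ∈ K, O' f = some (G.dirO O' f) ∧
        φ (G.dhead f (G.dirO O' f)) = φ (G.dtail f (G.dirO O' f)) + 1 := by
      rintro f (⟨hfX, hfY⟩ | ⟨hfY, hfX⟩)
      · obtain ⟨b, hb⟩ := crossing_some hX hfX
        have hsf : O' f = O f := hsame f hfY
        have hd' : G.dirO O' f = b := by unfold Multigraph.dirO; rw [hsf, hb]; rfl
        obtain ⟨h1, h2⟩ := hXstep f hfX b hb
        have h3 := hnocross Y f hfY b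
        refine ⟨by rw [hd', hsf, hb], ?_⟩
        rw [hd']
        simp only [hφ]
        by_cases hty : G.dtail f b ∈ Y
        · simp [h1, h2, hty, h3.mp hty]
        · have hty2 : G.dhead f b ∉ Y := fun hh => hty (h3.mpr hh)
          simp [h1, h2, hty, hty2]
      · obtain ⟨b, hb⟩ := crossing_some hY hfY
        have hsf : O' f = (O f).map not := hrev f hfY
        have hd' : G.dirO O' f = !b := by unfold Multigraph.dirO; rw [hsf, hb]; rfl
        obtain ⟨h1, h2⟩ := hYstep f hfY b hb
        have h3 := hnocross X f hfX b
        refine ⟨by rw [hd', hsf, hb]; rfl, ?_⟩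
        rw [hd']
        simp only [hφ, dhead_not, dtail_not]
        by_cases htx : G.dtail f b ∈ X
        · simp [h1, h2, htx, h3.mp htx]
        · have htx2 : G.dhead f b ∉ X := fun hh => htx (h3.mpr hh)
          simp [h1, h2, htx, htx2]
    have hnK : ∀ f ∉ K, φ (G.fst f) = φ (G.snd f) := by
      intro f hf
      rw [hKdef] at hf
      simp only [Set.mem_setOf_eq] at hf
      push_neg at hf
      by_cases hfX : G.crosses X f
      · have hfY : G.crosses Y f := hf.1 hfX
        obtain ⟨b, hb⟩ := crossing_some hX hfX
        obtain ⟨hx1, hx2⟩ := hXstep f hfX b hb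
        obtain ⟨hy1, hy2⟩ := hYstep f hfY b hb
        have : φ (G.dtail f b) = φ (G.dhead f b) := by
          simp only [hφ]
          simp [hx1, hx2, hy1, hy2]
        cases hbv : b
        · rw [hbv] at this
          simpa [dtail, dhead] using this.symm
        · rw [hbv] at this
          simpa [dtail, dhead] using this
      · have hfY : ¬ G.crosses Y f := fun hy => hfX (hf.2 hy)
        have h3' : (G.fst f ∈ X) ↔ (G.snd f ∈ X) := by
          simpa [dtail, dhead] using hnocross X f hfX true
        have h4' : (G.fst f ∈ Y) ↔ (G.snd f ∈ Y) := by
          simpa [dtail, dhead] using hnocross Y f hfY true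
        have q1 : (G.snd f ∈ X) ↔ (G.fst f ∈ X) := h3'.symm
        have q2 : (G.snd f ∈ Y) ↔ (G.fst f ∈ Y) := h4'.symm
        simp only [hφ]
        by_cases p1 : G.fst f ∈ X <;> by_cases p2 : G.fst f ∈ Y <;>
          simp [p1, p2, q1, q2]
    have heK : e ∈ K := Or.inl ⟨hcr, hcY⟩
    obtain ⟨X', hX', hcr', -⟩ := exists_cut_of_potential hK hnK heK
    exact ⟨X', hX', hcr'⟩

lemma cycE_sub_of_cycleRev {O O' : G.PartialOrientation} (h : G.cycleRev O O') :
    G.CycE O ⊆ G.CycE O' := by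
  obtain ⟨d, hd, hsame, hrev⟩ := h
  rintro e ⟨c, hc, he⟩
  by_cases hed : e ∈ d.map Prod.fst
  · refine ⟨_, isDCycle_revneg hd hrev, ?_⟩
    rw [List.map_reverse, List.map_map, List.mem_reverse]
    simpa using hed
  · set cE := (c.map Prod.fst).toFinset with hcE
    set dE := (d.map Prod.fst).toFinset with hdE
    have hmemc : ∀ f, f ∈ cE ↔ f ∈ c.map Prod.fst := by simp [hcE]
    have hmemd : ∀ f, f ∈ dE ↔ f ∈ d.map Prod.fst := by simp [hdE]
    set F := (cE \ dE) ∪ (dE \ cE) with hF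
    have hdisj : Disjoint (cE \ dE) (dE \ cE) := by
      apply Finset.disjoint_left.mpr
      intro a ha hb
      exact (Finset.mem_sdiff.mp hb).2 (Finset.mem_sdiff.mp ha).1
    have hcdir : ∀ f ∈ cE, O f = some (G.dirO O f) := by
      intro f hf
      obtain ⟨s, hs, rfl⟩ := List.mem_map.mp ((hmemc f).mp hf)
      rw [dirO_eq (hc.2.1 s hs)]
      exact hc.2.1 s hs
    have hddir : ∀ f ∈ dE, O f = some (G.dirO O f) := by
      intro f hf
      obtain ⟨s, hs, rfl⟩ := List.mem_map.mp ((hmemd f).mp hf)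
      rw [dirO_eq (hd.2.1 s hs)]
      exact hd.2.1 s hs
    have hflip : ∀ f ∈ dE, O' f = some (!(G.dirO O f)) := by
      intro f hf
      obtain ⟨s, hs, rfl⟩ := List.mem_map.mp ((hmemd f).mp hf)
      rw [dirO_eq (hd.2.1 s hs)]
      exact hrev s hs
    have hsame' : ∀ f ∈ cE \ dE, O' f = O f := by
      intro f hf
      exact hsame f (fun hm => (Finset.mem_sdiff.mp hf).2 ((hmemd f).mpr hm))
    have hdir1 : ∀ f ∈ cE \ dE, G.dirO O' f = G.dirO O f := by
      intro f hf
      unfold Multigraph.dirO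
      rw [hsame' f hf]
    have hdir2 : ∀ f ∈ dE \ cE, G.dirO O' f = !(G.dirO O f) := by
      intro f hf
      unfold Multigraph.dirO
      rw [hflip f (Finset.mem_sdiff.mp hf).1]
      rfl
    have hor' : ∀ f ∈ F, O' f = some (G.dirO O' f) := by
      intro f hf
      rcases Finset.mem_union.mp hf with hf' | hf'
      · rw [hdir1 f hf', hsame' f hf']
        exact hcdir f (Finset.mem_sdiff.mp hf').1
      · rw [hdir2 f hf']
        exact hflip f (Finset.mem_sdiff.mp hf').1
    have hcons' : G.Cons O' F := by
      intro ψ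
      rw [hF, Finset.sum_union hdisj]
      have h1 : (∑ f ∈ cE \ dE,
          (ψ (G.dhead f (G.dirO O' f)) - ψ (G.dtail f (G.dirO O' f))))
          = ∑ f ∈ cE \ dE, (ψ (G.dhead f (G.dirO O f)) - ψ (G.dtail f (G.dirO O f))) := by
        apply Finset.sum_congr rfl
        intro f hf
        rw [hdir1 f hf]
      have h2 : (∑ f ∈ dE \ cE,
          (ψ (G.dhead f (G.dirO O' f)) - ψ (G.dtail f (G.dirO O' f))))
          = ∑ f ∈ dE \ cE, -(ψ (G.dhead f (G.dirO O f)) - ψ (G.dtail f (G.dirO O f))) := by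
        apply Finset.sum_congr rfl
        intro f hf
        rw [hdir2 f hf, dhead_not, dtail_not]
        ring
      rw [h1, h2]
      have e1 : cE \ dE = cE \ (cE ∩ dE) := (Finset.sdiff_inter_self_left cE dE).symm
      have e2 : dE \ cE = dE \ (dE ∩ cE) := (Finset.sdiff_inter_self_left dE cE).symm
      rw [e1, e2, Finset.sum_sdiff_eq_sub Finset.inter_subset_left,
        Finset.sum_sdiff_eq_sub Finset.inter_subset_left, Finset.sum_neg_distrib,
        cycle_cons hc ψ, cycle_cons hd ψ, Finset.inter_comm dE cE]
      simp only [Finset.sum_neg_distrib]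
      ring
    have heF : e ∈ F := Finset.mem_union_left _ (Finset.mem_sdiff.mpr
      ⟨(hmemc e).mpr he, fun hm => hed ((hmemd e).mp hm)⟩)
    obtain ⟨c', hc', he', -⟩ := exists_cycle_through F.card F le_rfl hor' hcons' e heF
    exact ⟨c', hc', he'⟩

lemma moves_symm {O O' : G.PartialOrientation}
    (h : G.cutRev O O' ∨ G.cycleRev O O') : G.cutRev O' O ∨ G.cycleRev O' O := by
  rcases h with h | h
  · exact Or.inl (cutRev_symm h)
  · exact Or.inr (cycleRev_symm h)

lemma cycE_eq_of_move {O O' : G.PartialOrientation}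
    (h : G.cutRev O O' ∨ G.cycleRev O O') : G.CycE O' = G.CycE O := by
  apply Set.Subset.antisymm
  · rcases moves_symm h with h' | h'
    · exact cycE_sub_of_cutRev h'
    · exact cycE_sub_of_cycleRev h'
  · rcases h with h' | h'
    · exact cycE_sub_of_cutRev h'
    · exact cycE_sub_of_cycleRev h'

lemma cutE_eq_of_move {O O' : G.PartialOrientation}
    (h : G.cutRev O O' ∨ G.cycleRev O O') : G.CutE O' = G.CutE O := by
  apply Set.Subset.antisymm
  · rcases moves_symm h with h' | h'
    · exact cutE_sub_of_cutRev h'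
    · exact cutE_sub_of_cycleRev h'
  · rcases h with h' | h'
    · exact cutE_sub_of_cutRev h'
    · exact cutE_sub_of_cycleRev h'

lemma nocross_iff {Z : Set G.V} {f : G.E} (hf : ¬ G.crosses Z f) (b : Bool) :
    (G.dtail f b ∈ Z) ↔ (G.dhead f b ∈ Z) := by
  unfold crosses at hf
  cases b <;> simp [dtail, dhead] <;> tauto

lemma eq_ends_iff (φ : G.V → ℤ) (e : G.E) (b : Bool) :
    (φ (G.fst e) = φ (G.snd e)) ↔ (φ (G.dhead e b) = φ (G.dtail e b)) := by
  cases b <;> simp [dhead, dtail] <;> exact eq_comm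

/-- The difference invariant along a path of cut and cycle reversals. -/
def INV (G : Multigraph) (O1 O2 : G.PartialOrientation) : Prop :=
  G.CycE O2 = G.CycE O1 ∧ G.CutE O2 = G.CutE O1 ∧
  ∃ (F K : Finset G.E) (φ : G.V → ℤ),
    (↑F ⊆ G.CycE O1) ∧ (↑K ⊆ G.CutE O1) ∧
    (∀ e, e ∉ F → e ∉ K → O2 e = O1 e) ∧
    (∀ e, (e ∈ F ∨ e ∈ K) →
      O2 e = some (!(G.dirO O1 e)) ∧ O1 e = some (G.dirO O1 e)) ∧
    G.Cons O1 F ∧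
    (∀ e ∈ K, φ (G.dhead e (G.dirO O1 e)) = φ (G.dtail e (G.dirO O1 e)) + 1) ∧
    (∀ e ∉ K, φ (G.fst e) = φ (G.snd e))

lemma INV_refl (O : G.PartialOrientation) : G.INV O O := by
  refine ⟨rfl, rfl, ∅, ∅, 0, by simp, by simp, fun e _ _ => rfl, ?_, ?_, by simp, by simp⟩
  · rintro e (he | he) <;> simp at he
  · intro ψ
    simp

lemma INV_step {O1 O2 O3 : G.PartialOrientation} (h : G.INV O1 O2)
    (hm : G.cutRev O2 O3 ∨ G.cycleRev O2 O3) : G.INV O1 O3 := by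
  obtain ⟨hcyc, hcut, F, K, φ, hFsub, hKsub, hoff, hflip, hcons, hpot, hnpot⟩ := h
  have hcyc3 : G.CycE O3 = G.CycE O1 := (cycE_eq_of_move hm).trans hcyc
  have hcut3 : G.CutE O3 = G.CutE O1 := (cutE_eq_of_move hm).trans hcut
  have hdisjFK : ∀ e, e ∈ F → e ∈ K → False := by
    intro e heF heK
    exact cycE_cutE_disjoint (hFsub heF) (hKsub heK)
  rcases hm with hmv | hmv
  · -- cut reversal along Y
    obtain ⟨Y, hY, hsame, hrev⟩ := hmv
    set Yc : Finset G.E := Finset.univ.filter (fun f => G.crosses Y f) with hYc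
    have hYmem : ∀ f, f ∈ Yc ↔ G.crosses Y f := by
      intro f
      simp [hYc]
    have hYsub : ↑Yc ⊆ G.CutE O1 := by
      intro f hf
      rw [← hcut]
      exact ⟨Y, hY, (hYmem f).mp hf⟩
    have hYF : ∀ f, f ∈ Yc → f ∈ F → False := by
      intro f hf hfF
      exact cycE_cutE_disjoint (hFsub hfF) (hYsub hf)
    refine ⟨hcyc3, hcut3, F, (K \ Yc) ∪ (Yc \ K), fun v => φ v + (if v ∈ Y then 0 else 1),
      hFsub, ?_, ?_, ?_, hcons, ?_, ?_⟩
    · intro f hf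
      rcases Finset.mem_union.mp hf with hf' | hf'
      · exact hKsub (Finset.mem_coe.mpr (Finset.mem_sdiff.mp hf').1)
      · exact hYsub (Finset.mem_coe.mpr (Finset.mem_sdiff.mp hf').1)
    · -- off condition
      intro e heF heK'
      by_cases heY : e ∈ Yc
      · -- then e ∈ K (since e ∉ Yc \ K would need e ∉ K ... )
        have heK : e ∈ K := by
          by_contra hK
          exact heK' (Finset.mem_union_right _ (Finset.mem_sdiff.mpr ⟨heY, hK⟩))
        obtain ⟨h2, h1⟩ := hflip e (Or.inr heK)
        rw [hrev e ((hYmem e).mp heY), h2, h1]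
        simp
      · rw [hsame e (fun hc => heY ((hYmem e).mpr hc))]
        apply hoff e heF
        intro heK
        exact heK' (Finset.mem_union_left _ (Finset.mem_sdiff.mpr ⟨heK, heY⟩))
    · -- flip condition
      rintro e (heF | heK')
      · have h := hflip e (Or.inl heF)
        have heY : e ∉ Yc := fun hY' => hYF e hY' heF
        rw [hsame e (fun hc => heY ((hYmem e).mpr hc))]
        exact h
      · rcases Finset.mem_union.mp heK' with h' | h'
        · obtain ⟨h1, h2⟩ := Finset.mem_sdiff.mp h'
          have h := hflip e (Or.inr h1)
          rw [hsame e (fun hc => h2 ((hYmem e).mpr hc))]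
          exact h
        · obtain ⟨h1, h2⟩ := Finset.mem_sdiff.mp h'
          have hcr := (hYmem e).mp h1
          have heF : e ∉ F := fun hf => hYF e h1 hf
          have hO2 : O2 e = O1 e := hoff e heF h2
          obtain ⟨b, hb⟩ := crossing_some hY hcr
          have hb1 : O1 e = some b := by rw [← hO2]; exact hb
          have hd1 : G.dirO O1 e = b := dirO_eq hb1
          refine ⟨?_, by rw [hd1]; exact hb1⟩
          rw [hrev e hcr, hb, hd1]
          rfl
    · -- potential condition on K'
      intro e he
      rcases Finset.mem_union.mp he with h' | h'
      · obtain ⟨h1, h2⟩ := Finset.mem_sdiff.mp h'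
        have hnc : ¬ G.crosses Y e := fun hc => h2 ((hYmem e).mpr hc)
        have hiff := nocross_iff hnc (G.dirO O1 e)
        have := hpot e h1
        by_cases hty : G.dtail e (G.dirO O1 e) ∈ Y
        · simp [hty, hiff.mp hty]
          omega
        · have hhy : G.dhead e (G.dirO O1 e) ∉ Y := fun hh => hty (hiff.mpr hh)
          simp [hty, hhy]
          omega
      · obtain ⟨h1, h2⟩ := Finset.mem_sdiff.mp h'
        have hcr := (hYmem e).mp h1
        have heF : e ∉ F := fun hf => hYF e h1 hf
        have hO2 : O2 e = O1 e := hoff e heF h2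
        obtain ⟨b, hb⟩ := crossing_some hY hcr
        have hb2 : O2 e = some b := hb
        have hb1 : O1 e = some b := by rw [← hO2]; exact hb
        have hd1 : G.dirO O1 e = b := dirO_eq hb1
        obtain ⟨ht, hh⟩ := dircut_step hY hcr hb
        have hpe := hnpot e h2
        have hpe' := (eq_ends_iff φ e b).mp hpe
        rw [hd1]
        simp [ht, hh]
        omega
    · -- potential condition off K'
      intro e he
      have h1 : ¬ (e ∈ K ∧ e ∉ Yc) := fun hc =>
        he (Finset.mem_union_left _ (Finset.mem_sdiff.mpr ⟨hc.1, hc.2⟩))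
      have h2 : ¬ (e ∈ Yc ∧ e ∉ K) := fun hc =>
        he (Finset.mem_union_right _ (Finset.mem_sdiff.mpr ⟨hc.1, hc.2⟩))
      by_cases heK : e ∈ K
      · -- then e ∈ Yc
        have heY : e ∈ Yc := by tauto
        have hcr := (hYmem e).mp heY
        obtain ⟨hflip2, hor1⟩ := hflip e (Or.inr heK)
        have hstep := dircut_step hY hcr hflip2
        rw [dtail_not, dhead_not] at hstep
        obtain ⟨hh, ht⟩ := hstep
        have := hpot e heK
        refine (eq_ends_iff (fun v => φ v + if v ∈ Y then 0 else 1) e (G.dirO O1 e)).mpr ?_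
        simp [hh, ht]
        omega
      · have heY : e ∉ Yc := by tauto
        have hnc : ¬ G.crosses Y e := fun hc => heY ((hYmem e).mpr hc)
        have hiff := nocross_iff hnc true
        simp only [dtail, dhead, if_pos] at hiff
        have hpe := hnpot e heK
        by_cases hfY : G.fst e ∈ Y
        · have : G.snd e ∈ Y := by
            unfold crosses at hnc
            tauto
          simp [hfY, this]
          omega
        · have : G.snd e ∉ Y := by
            unfold crosses at hnc
            tauto
          simp [hfY, this]
          omega
  · -- cycle reversal along d
    obtain ⟨d, hd, hsame, hrev⟩ := hmv
    set dE : Finset G.E := (d.map Prod.fst).toFinset with hdE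
    have hdmem : ∀ f, f ∈ dE ↔ f ∈ d.map Prod.fst := by simp [hdE]
    have hdsub : ↑dE ⊆ G.CycE O1 := by
      intro f hf
      rw [← hcyc]
      exact ⟨d, hd, (hdmem f).mp hf⟩
    have hdK : ∀ f, f ∈ dE → f ∈ K → False := by
      intro f hf hfK
      exact cycE_cutE_disjoint (hdsub hf) (hKsub hfK)
    -- O2-direction of d edges
    have hd2 : ∀ f ∈ dE, O2 f = some (G.dirO O2 f) ∧ O3 f = some (!(G.dirO O2 f)) := by
      intro f hf
      obtain ⟨s, hs, rfl⟩ := List.mem_map.mp ((hdmem f).mp hf)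
      rw [dirO_eq (hd.2.1 s hs)]
      exact ⟨hd.2.1 s hs, hrev s hs⟩
    have hdir21 : ∀ f ∈ dE, f ∉ F → G.dirO O2 f = G.dirO O1 f ∧ O2 f = O1 f := by
      intro f hf hfF
      have hO2 : O2 f = O1 f := hoff f hfF (fun hK => hdK f hf hK)
      unfold Multigraph.dirO
      rw [hO2]
      exact ⟨rfl, rfl⟩
    have hdir22 : ∀ f ∈ dE, f ∈ F → G.dirO O2 f = !(G.dirO O1 f) := by
      intro f hf hfF
      have := (hflip f (Or.inl hfF)).1
      unfold Multigraph.dirO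
      rw [this]
      rfl
    refine ⟨hcyc3, hcut3, (F \ dE) ∪ (dE \ F), K, φ, ?_, hKsub, ?_, ?_, ?_, hpot, hnpot⟩
    · intro f hf
      rcases Finset.mem_union.mp hf with hf' | hf'
      · exact hFsub (Finset.mem_coe.mpr (Finset.mem_sdiff.mp hf').1)
      · exact hdsub (Finset.mem_coe.mpr (Finset.mem_sdiff.mp hf').1)
    · -- off condition
      intro e heF' heK
      by_cases heD : e ∈ dE
      · have heF : e ∈ F := by
          by_contra hF
          exact heF' (Finset.mem_union_right _ (Finset.mem_sdiff.mpr ⟨heD, hF⟩))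
        obtain ⟨h2, h3⟩ := hd2 e heD
        rw [h3, hdir22 e heD heF]
        simp
        exact (hflip e (Or.inl heF)).2.symm
      · rw [hsame e (fun hc => heD ((hdmem e).mpr hc))]
        apply hoff e _ heK
        intro heF
        exact heF' (Finset.mem_union_left _ (Finset.mem_sdiff.mpr ⟨heF, heD⟩))
    · -- flip condition
      rintro e (heF' | heK)
      · rcases Finset.mem_union.mp heF' with h' | h'
        · obtain ⟨h1, h2⟩ := Finset.mem_sdiff.mp h'
          rw [hsame e (fun hc => h2 ((hdmem e).mpr hc))]
          exact hflip e (Or.inl h1)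
        · obtain ⟨h1, h2⟩ := Finset.mem_sdiff.mp h'
          obtain ⟨hb2, hb3⟩ := hd2 e h1
          obtain ⟨hdir, hO2⟩ := hdir21 e h1 h2
          rw [hb3, hdir]
          constructor
          · rfl
          · rw [← hO2, hb2, hdir]
      · have heD : e ∉ dE := fun hf => hdK e hf heK
        rw [hsame e (fun hc => heD ((hdmem e).mpr hc))]
        exact hflip e (Or.inr heK)
    · -- conservation for F' = (F \ dE) ∪ (dE \ F)
      intro ψ
      have hdisj : Disjoint (F \ dE) (dE \ F) := by
        apply Finset.disjoint_left.mpr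
        intro a ha hb
        exact (Finset.mem_sdiff.mp hb).2 (Finset.mem_sdiff.mp ha).1
      rw [Finset.sum_union hdisj]
      -- cycle conservation of d in O2 coordinates
      have hdcons := cycle_cons hd ψ
      rw [← hdE] at hdcons
      have hsplit : dE = (dE \ F) ∪ (dE ∩ F) := by
        rw [Finset.sdiff_union_inter]
      rw [hsplit, Finset.sum_union (Finset.sdiff_disjoint.mono_right Finset.inter_subset_right)] at hdcons
      have ht1 : (∑ f ∈ dE \ F, (ψ (G.dhead f (G.dirO O2 f)) - ψ (G.dtail f (G.dirO O2 f))))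
          = ∑ f ∈ dE \ F, (ψ (G.dhead f (G.dirO O1 f)) - ψ (G.dtail f (G.dirO O1 f))) := by
        apply Finset.sum_congr rfl
        intro f hf
        obtain ⟨h1, h2⟩ := Finset.mem_sdiff.mp hf
        rw [(hdir21 f h1 h2).1]
      have ht2 : (∑ f ∈ dE ∩ F, (ψ (G.dhead f (G.dirO O2 f)) - ψ (G.dtail f (G.dirO O2 f))))
          = ∑ f ∈ dE ∩ F, -(ψ (G.dhead f (G.dirO O1 f)) - ψ (G.dtail f (G.dirO O1 f))) := by
        apply Finset.sum_congr rfl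
        intro f hf
        obtain ⟨h1, h2⟩ := Finset.mem_inter.mp hf
        rw [hdir22 f h1 h2, dhead_not, dtail_not]
        ring
      rw [ht1, ht2, Finset.sum_neg_distrib] at hdcons
      -- now the F-part
      have e1 : F \ dE = F \ (F ∩ dE) := (Finset.sdiff_inter_self_left F dE).symm
      rw [e1, Finset.sum_sdiff_eq_sub Finset.inter_subset_left, hcons ψ,
        Finset.inter_comm F dE]
      omega

lemma INV_of_path {O1 O2 : G.PartialOrientation}
    (h : Relation.ReflTransGen (fun a b => G.cutRev a b ∨ G.cycleRev a b) O1 O2) :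
    G.INV O1 O2 := by
  induction h with
  | refl => exact INV_refl O1
  | tail _ hstep ih => exact INV_step ih hstep

lemma exists_min_step {α : Type*} {β : Type*} [LinearOrder β] (f : α → β) :
    ∀ (l : List α), l ≠ [] → ∃ s ∈ l, ∀ t ∈ l, f s ≤ f t := by
  intro l
  induction l with
  | nil => intro h; exact absurd rfl h
  | cons a t ih =>
    intro _
    rcases eq_or_ne t [] with rfl | hne
    · refine ⟨a, by simp, ?_⟩
      intro u hu
      simp at hu
      rw [hu]
    · obtain ⟨s, hs, hmin⟩ := ih hne
      rcases le_total (f a) (f s) with h | h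
      · refine ⟨a, by simp, ?_⟩
        intro u hu
        rcases List.mem_cons.mp hu with rfl | hu'
        · exact le_refl _
        · exact h.trans (hmin u hu')
      · refine ⟨s, List.mem_cons_of_mem a hs, ?_⟩
        intro u hu
        rcases List.mem_cons.mp hu with rfl | hu'
        · exact h
        · exact hmin u hu'

/-- two orientations related by moves and both minimal are equal -/
theorem unique_minimal [LinearOrder G.E] {A : G.E → Bool} {O1 O2 : G.PartialOrientation}
    (hpath : Relation.ReflTransGen (fun a b => G.cutRev a b ∨ G.cycleRev a b) O1 O2)
    (hmin1 : G.CutMinimal A O1 ∧ G.CycleMinimal A O1)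
    (hmin2 : G.CutMinimal A O2 ∧ G.CycleMinimal A O2) : O1 = O2 := by
  obtain ⟨hcyc, hcut, F, K, φ, hFsub, hKsub, hoff, hflip, hcons, hpot, hnpot⟩ :=
    INV_of_path hpath
  funext e
  by_contra hne
  have hne' : O2 e ≠ O1 e := fun h => hne h.symm
  have heFK : e ∈ F ∨ e ∈ K := by
    by_contra h
    push_neg at h
    exact hne' (hoff e h.1 h.2)
  rcases heFK with heF | heK
  · -- cycle case
    have hor : ∀ f ∈ F, O1 f = some (G.dirO O1 f) := fun f hf => (hflip f (Or.inl hf)).2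
    obtain ⟨c, hc, hcF⟩ := exists_cycle_of_cons hor hcons heF
    -- minimal step of c w.r.t. O1
    obtain ⟨hne0, -, -⟩ := hc.parts
    have hO2rev : ∀ s ∈ c, O2 s.1 = some (!s.2) := by
      intro s hs
      obtain ⟨h1, h2⟩ := hcF s hs
      rw [h2]
      exact (hflip s.1 (Or.inl h1)).1
    have hc2 : G.IsDCycle O2 ((c.map (fun s => (s.1, !s.2))).reverse) :=
      isDCycle_revneg hc hO2rev
    obtain ⟨s, hs, hsmin, hsA⟩ := hmin1.2 c hc
    obtain ⟨t, ht, htmin, htA⟩ := hmin2.2 _ hc2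
    obtain ⟨u, hu, rfl⟩ := List.mem_map.mp (List.mem_reverse.mp ht)
    have h1 : s.1 ≤ u.1 := hsmin _ hu
    have h2 : u.1 ≤ s.1 := by
      refine htmin (s.1, !s.2) ?_
      rw [List.mem_reverse]
      exact List.mem_map.mpr ⟨s, hs, rfl⟩
    have heq : s.1 = u.1 := le_antisymm h1 h2
    have hsd : s.2 = G.dirO O1 s.1 := (hcF s hs).2
    have hud : u.2 = G.dirO O1 u.1 := (hcF u hu).2
    rw [hsd] at hsA
    simp only at htA
    rw [hud, ← heq] at htA
    rw [← hsA] at htA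
    simp at htA
  · -- cut case
    have hK' : ∀ f ∈ (↑K : Set G.E), O1 f = some (G.dirO O1 f) ∧
        φ (G.dhead f (G.dirO O1 f)) = φ (G.dtail f (G.dirO O1 f)) + 1 := by
      intro f hf
      exact ⟨(hflip f (Or.inr hf)).2, hpot f hf⟩
    have hnK' : ∀ f ∉ (↑K : Set G.E), φ (G.fst f) = φ (G.snd f) := by
      intro f hf
      exact hnpot f hf
    obtain ⟨X, hX, hcr, hcrK⟩ := exists_cut_of_potential hK' hnK' (Finset.mem_coe.mpr heK)
    -- O2 cut on Xᶜ
    have hrev : ∀ f, G.crosses X f → O2 f = (O1 f).map not := by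
      intro f hf
      have hfK : f ∈ K := hcrK f hf
      obtain ⟨h1, h2⟩ := hflip f (Or.inr hfK)
      rw [h1, h2]
      rfl
    have hX2 : G.IsDirCut O2 Xᶜ := isDirCut_compl hX hrev
    obtain ⟨m1, hm1cr, hm1min, hm1A⟩ := hmin1.1 X hX
    obtain ⟨m2, hm2cr, hm2min, hm2A⟩ := hmin2.1 Xᶜ hX2
    have hm2cr' : G.crosses X m2 := crosses_compl.mp hm2cr
    have h1 : m1 ≤ m2 := hm1min m2 hm2cr'
    have h2 : m2 ≤ m1 := hm2min m1 (crosses_compl.mpr hm1cr)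
    have heq : m1 = m2 := le_antisymm h1 h2
    have hm1K : m1 ∈ K := hcrK m1 hm1cr
    obtain ⟨hf1, hf2⟩ := hflip m1 (Or.inr hm1K)
    rw [hf2] at hm1A
    rw [← heq, hf1] at hm2A
    rw [Option.some_inj.mp hm1A] at hm2A
    simp at hm2A

/-- rank of an edge in the order: number of larger edges -/
def rkE (G : Multigraph) [LinearOrder G.E] (e : G.E) : ℕ :=
  (Finset.univ.filter (fun f => e < f)).card

lemma rkE_lt [LinearOrder G.E] {e m : G.E} (h : m < e) : G.rkE e < G.rkE m := by
  have hsub : Finset.univ.filter (fun f => e < f) ⊆ Finset.univ.filter (fun f => m < f) := by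
    intro f hf
    simp only [Finset.mem_filter, Finset.mem_univ, true_and] at hf ⊢
    exact h.trans hf
  exact Finset.card_lt_card ((Finset.ssubset_iff_of_subset hsub).mpr
    ⟨e, by simp [h], by simp⟩)

lemma sum_two_pow_lt : ∀ n : ℕ, (∑ i ∈ Finset.range n, 2^i) < 2^n := by
  intro n
  induction n with
  | zero => simp
  | succ n ih =>
    rw [Finset.sum_range_succ, pow_succ]
    omega

lemma key_bound [LinearOrder G.E] {T : Finset G.E} {m : G.E} (hT : ∀ x ∈ T, m < x) :
    (∑ x ∈ T, 2 ^ G.rkE x) < 2 ^ G.rkE m := by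
  have hinj : ∀ x ∈ T, ∀ y ∈ T, G.rkE x = G.rkE y → x = y := by
    intro a ha b hb hab
    by_contra hne
    rcases lt_or_gt_of_ne hne with h | h
    · have := rkE_lt h; omega
    · have := rkE_lt h; omega
  have h1 : (∑ x ∈ T, 2 ^ G.rkE x) = ∑ i ∈ T.image G.rkE, 2 ^ i := by
    rw [Finset.sum_image hinj]
  have h2 : T.image G.rkE ⊆ Finset.range (G.rkE m) := by
    intro i hi
    obtain ⟨x, hx, rfl⟩ := Finset.mem_image.mp hi
    exact Finset.mem_range.mpr (rkE_lt (hT x hx))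
  calc (∑ x ∈ T, 2 ^ G.rkE x) = ∑ i ∈ T.image G.rkE, 2 ^ i := h1
  _ ≤ ∑ i ∈ Finset.range (G.rkE m), 2 ^ i :=
      Finset.sum_le_sum_of_subset h2
  _ < 2 ^ G.rkE m := sum_two_pow_lt _

/-- weight of an orientation: total weight of edges oriented against `A` -/
def wt (G : Multigraph) [LinearOrder G.E] (A : G.E → Bool) (O : G.PartialOrientation) : ℕ :=
  ∑ e ∈ Finset.univ.filter (fun e => O e = some (!(A e))), 2 ^ G.rkE e

lemma wt_lt [LinearOrder G.E] {A : G.E → Bool} {O O' : G.PartialOrientation}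
    {D : Finset G.E} {m : G.E}
    (hmD : m ∈ D) (hbadm : O m = some (!(A m))) (hO'm : O' m = some (A m))
    (hsame : ∀ f, f ∉ D → O' f = O f) (hminD : ∀ x ∈ D, m ≤ x) :
    G.wt A O' < G.wt A O := by
  classical
  set bad := Finset.univ.filter (fun e => O e = some (!(A e))) with hbad
  set bad' := Finset.univ.filter (fun e => O' e = some (!(A e))) with hbad'
  have hmbad : m ∈ bad := by simp [hbad, hbadm]
  have hmbad' : m ∉ bad' := by
    simp only [hbad', Finset.mem_filter, Finset.mem_univ, true_and, hO'm]
    cases A m <;> simp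
  have hsub : bad' ⊆ bad.erase m ∪ D.erase m := by
    intro f hf
    have hfm : f ≠ m := fun h => hmbad' (h ▸ hf)
    by_cases hfD : f ∈ D
    · exact Finset.mem_union_right _ (Finset.mem_erase.mpr ⟨hfm, hfD⟩)
    · apply Finset.mem_union_left
      refine Finset.mem_erase.mpr ⟨hfm, ?_⟩
      simp only [hbad', Finset.mem_filter, Finset.mem_univ, true_and] at hf
      simp only [hbad, Finset.mem_filter, Finset.mem_univ, true_and]
      rw [← hsame f hfD]
      exact hf
  have h1 : G.wt A O' ≤ (∑ x ∈ bad.erase m, 2 ^ G.rkE x) + ∑ x ∈ D.erase m, 2 ^ G.rkE x := by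
    calc G.wt A O' = ∑ x ∈ bad', 2 ^ G.rkE x := rfl
    _ ≤ ∑ x ∈ bad.erase m ∪ D.erase m, 2 ^ G.rkE x := Finset.sum_le_sum_of_subset hsub
    _ ≤ _ := by
        have := Finset.sum_union_inter (s₁ := bad.erase m) (s₂ := D.erase m)
          (f := fun x => 2 ^ G.rkE x)
        omega
  have h2 : (∑ x ∈ bad.erase m, 2 ^ G.rkE x) + 2 ^ G.rkE m = G.wt A O :=
    Finset.sum_erase_add bad _ hmbad
  have h3 : (∑ x ∈ D.erase m, 2 ^ G.rkE x) < 2 ^ G.rkE m := by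
    apply key_bound
    intro x hx
    obtain ⟨hxm, hxD⟩ := Finset.mem_erase.mp hx
    exact lt_of_le_of_ne (hminD x hxD) (Ne.symm hxm)
  have h4 : G.wt A O = (∑ x ∈ bad.erase m, 2 ^ G.rkE x) + 2 ^ G.rkE m := h2.symm
  omega

lemma exists_decreasing [LinearOrder G.E] {A : G.E → Bool} {O : G.PartialOrientation}
    (hnot : ¬ (G.CutMinimal A O ∧ G.CycleMinimal A O)) :
    ∃ O', (G.cutRev O O' ∨ G.cycleRev O O') ∧ G.wt A O' < G.wt A O := by
  classical
  by_cases hcut : G.CutMinimal A O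
  · -- must be non cycle minimal
    have hcyc : ¬ G.CycleMinimal A O := fun h => hnot ⟨hcut, h⟩
    unfold CycleMinimal at hcyc
    push_neg at hcyc
    obtain ⟨c, hc, hnm⟩ := hcyc
    obtain ⟨hne, -, -⟩ := hc.parts
    obtain ⟨s0, hs0, hs0min⟩ := exists_min_step Prod.fst c hne
    have hs0A : s0.2 = !(A s0.1) := by
      have hne2 : s0.2 ≠ A s0.1 := by
        intro h
        exact hnm ⟨s0, hs0, hs0min, h⟩
      cases hb : s0.2 <;> cases hA : A s0.1 <;> rw [hb, hA] at hne2 <;> simp_all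
    have hbadm : O s0.1 = some (!(A s0.1)) := by
      rw [← hs0A]
      exact hc.2.1 s0 hs0
    set O' : G.PartialOrientation :=
      fun f => if f ∈ c.map Prod.fst then (O f).map not else O f with hO'
    have hmove : G.cycleRev O O' := by
      refine ⟨c, hc, ?_, ?_⟩
      · intro f hf
        simp only [hO']
        rw [if_neg hf]
      · intro s hs
        simp only [hO']
        rw [if_pos (List.mem_map.mpr ⟨s, hs, rfl⟩), hc.2.1 s hs]
        rfl
    refine ⟨O', Or.inr hmove, ?_⟩
    apply wt_lt (D := (c.map Prod.fst).toFinset) (m := s0.1)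
    · exact List.mem_toFinset.mpr (List.mem_map.mpr ⟨s0, hs0, rfl⟩)
    · exact hbadm
    · simp only [hO']
      rw [if_pos (List.mem_map.mpr ⟨s0, hs0, rfl⟩), hbadm]
      simp
    · intro f hf
      simp only [hO']
      rw [if_neg (fun hm => hf (List.mem_toFinset.mpr hm))]
    · intro x hx
      obtain ⟨t, ht, rfl⟩ := List.mem_map.mp (List.mem_toFinset.mp hx)
      exact hs0min t ht
  · unfold CutMinimal at hcut
    push_neg at hcut
    obtain ⟨X, hX, hnm⟩ := hcut
    set C : Finset G.E := Finset.univ.filter (fun f => G.crosses X f) with hC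
    have hCmem : ∀ f, f ∈ C ↔ G.crosses X f := by intro f; simp [hC]
    have hCne : C.Nonempty := by
      obtain ⟨e0, he0⟩ := hX.1
      exact ⟨e0, (hCmem e0).mpr he0⟩
    set m := C.min' hCne with hm
    have hmC : m ∈ C := C.min'_mem hCne
    have hmcr : G.crosses X m := (hCmem m).mp hmC
    have hmmin : ∀ x ∈ C, m ≤ x := fun x hx => C.min'_le x hx
    obtain ⟨b, hb⟩ := crossing_some hX hmcr
    have hbA : b = !(A m) := by
      have hne2 : b ≠ A m := by
        intro h
        exact hnm ⟨m, hmcr, fun e' he' => hmmin e' ((hCmem e').mpr he'), by rw [hb, h]⟩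
      cases hbv : b <;> cases hA : A m <;> rw [hbv, hA] at hne2 <;> simp_all
    set O' : G.PartialOrientation :=
      fun f => if G.crosses X f then (O f).map not else O f with hO'
    have hmove : G.cutRev O O' := by
      refine ⟨X, hX, ?_, ?_⟩
      · intro f hf
        simp only [hO']
        rw [if_neg hf]
      · intro f hf
        simp only [hO']
        rw [if_pos hf]
    refine ⟨O', Or.inl hmove, ?_⟩
    apply wt_lt (D := C) (m := m)
    · exact hmC
    · rw [hb, hbA]
    · simp only [hO']
      rw [if_pos hmcr, hb, hbA]
      simp
    · intro f hf
      simp only [hO']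
      rw [if_neg (fun hc => hf ((hCmem f).mpr hc))]
    · exact hmmin

lemma exists_minimal [LinearOrder G.E] (A : G.E → Bool) :
    ∀ (n : ℕ) (O : G.PartialOrientation), G.wt A O ≤ n →
    ∃ O', Relation.ReflTransGen (fun a b => G.cutRev a b ∨ G.cycleRev a b) O O' ∧
      G.CutMinimal A O' ∧ G.CycleMinimal A O' := by
  intro n
  induction n with
  | zero =>
    intro O hw
    by_cases h : G.CutMinimal A O ∧ G.CycleMinimal A O
    · exact ⟨O, Relation.ReflTransGen.refl, h⟩
    · obtain ⟨O', hmv, hlt⟩ := exists_decreasing h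
      omega
  | succ n ih =>
    intro O hw
    by_cases h : G.CutMinimal A O ∧ G.CycleMinimal A O
    · exact ⟨O, Relation.ReflTransGen.refl, h⟩
    · obtain ⟨O', hmv, hlt⟩ := exists_decreasing h
      obtain ⟨O'', hpath, hmin⟩ := ih O' (by omega)
      exact ⟨O'', Relation.ReflTransGen.head hmv hpath, hmin⟩

end Multigraph

/-- every partial orientation is equivalent via directed cycle and directed
cut reversals to a unique partial orientation that is both cycle minimal and cut minimal. -/
theorem stmt9 (G : Multigraph) [LinearOrder G.E] (A : G.E → Bool) (hG : G.Connected)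
    (O : G.PartialOrientation) :
    ∃! O', Relation.ReflTransGen (fun a b => G.cutRev a b ∨ G.cycleRev a b) O O' ∧
      G.CutMinimal A O' ∧ G.CycleMinimal A O' := by
  obtain ⟨O', hpath, hmin⟩ := Multigraph.exists_minimal A (G.wt A O) O le_rfl
  refine ⟨O', ⟨hpath, hmin⟩, ?_⟩
  rintro y ⟨hypath, hymin⟩
  have hsymm : Symmetric (fun a b => G.cutRev a b ∨ G.cycleRev a b) :=
    fun a b h => Multigraph.moves_symm h
  have hpath2 : Relation.ReflTransGen (fun a b => G.cutRev a b ∨ G.cycleRev a b) O' y :=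
    Relation.ReflTransGen.trans (by haveI : Std.Symm (fun a b => G.cutRev a b ∨ G.cycleRev a b) := ⟨fun a b h => hsymm h⟩; exact symm hpath) hypath
  exact (Multigraph.unique_minimal hpath2 hmin hymin).symm
end
end

section
/- If two partial orientations of a connected multigraph have the same indegree sequence, then they are related by an edge-disjoint union of directed cycle reversals and Jacob's ladder cascades (reversals of half-open paths). -/
open Classical

noncomputable section

set_option linter.unusedSectionVars false
set_option maxHeartbeats 1000000

namespace Stmt14Aux

variable {α W : Type} [DecidableEq α] [DecidableEq W]

lemma dropLast_subset' (l : List α) : ∀ b ∈ l.dropLast, b ∈ l :=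
  fun _ hb => List.dropLast_subset l hb

lemma chain_strengthen {V : Type} (f g : α → Option V) :
    ∀ t : List α, List.Chain' (fun x y => f x = g y) t →
      (∀ b ∈ t.dropLast, f b ≠ none) →
      List.Chain' (fun x y => f x = g y ∧ f x ≠ none) t := by
  intro t
  induction t with
  | nil => simp [List.Chain']
  | cons a t ih =>
    cases t with
    | nil => simp [List.Chain']
    | cons b t' =>
      intro hch hdl
      simp only [List.Chain', List.isChain_cons_cons] at hch ⊢
      have ha : f a ≠ none := hdl a (by simp)
      refine ⟨⟨hch.1, ha⟩, ih hch.2 ?_⟩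
      intro c hc
      refine hdl c ?_
      rw [List.dropLast_cons₂]
      exact List.mem_cons_of_mem a hc

lemma chain_tail {V : Type} (f g : α → Option V) :
    ∀ t : List α, List.Chain' (fun x y => f x = g y) t →
      (∀ b ∈ t.dropLast, f b ≠ none) →
      ∀ b ∈ t.tail, g b ≠ none := by
  intro t
  induction t with
  | nil => simp
  | cons a t ih =>
    cases t with
    | nil => simp
    | cons b t' =>
      intro hch hdl c hc
      simp only [List.Chain', List.isChain_cons_cons] at hch
      have hdl' : ∀ x ∈ (b :: t').dropLast, f x ≠ none := by
        intro x hx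
        refine hdl x ?_
        rw [List.dropLast_cons₂]
        exact List.mem_cons_of_mem a hx
      rcases List.mem_cons.mp hc with rfl | hc'
      · rw [← hch.1]
        exact hdl a (by simp)
      · exact ih hch.2 hdl' c hc'



variable {α W : Type} [DecidableEq α] [DecidableEq W]

lemma count_chain (f g : α → W) (u : W) :
    ∀ (l : List α) (a : α), List.Chain' (fun x y => f x = g y) (a :: l) →
      (a :: l).countP (fun x => decide (f x = u)) + (if g a = u then 1 else 0)
        = (a :: l).countP (fun x => decide (g x = u))
          + (if f ((a :: l).getLast (List.cons_ne_nil a l)) = u then 1 else 0) := by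
  intro l
  induction l with
  | nil =>
    intro a _
    simp only [List.countP_cons, List.countP_nil, List.getLast_singleton,
      decide_eq_true_eq, Nat.zero_add]
    split_ifs <;> simp_all
  | cons b l' ih =>
    intro a hch
    simp only [List.Chain', List.isChain_cons_cons] at hch
    have h1 := ih b hch.2
    rw [List.countP_cons (l := b :: l'), List.countP_cons (l := b :: l')]
    have h3 : ((a :: b :: l').getLast (List.cons_ne_nil _ _))
        = ((b :: l').getLast (List.cons_ne_nil _ _)) := by
      simp [List.getLast_cons]
    rw [h3]
    simp only [decide_eq_true_eq] at h1 ⊢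
    have hcond : (f a = u) = (g b = u) := by rw [hch.1]
    simp only [hcond]
    split_ifs at h1 ⊢ <;> omega

lemma extend_trail (f g : α → W) (S : Finset α)
    (hbal : ∀ u, (S.filter fun e => f e = u).card = (S.filter fun e => g e = u).card)
    (a : α) (l : List α) (hnd : (a :: l).Nodup) (hS : ∀ e ∈ a :: l, e ∈ S)
    (hch : List.Chain' (fun x y => f x = g y) (a :: l))
    (hne : f ((a :: l).getLast (List.cons_ne_nil a l)) ≠ g a) :
    ∃ b ∈ S, b ∉ a :: l ∧ g b = f ((a :: l).getLast (List.cons_ne_nil a l)) := by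
  set t := a :: l with ht
  set u := f (t.getLast (List.cons_ne_nil a l)) with hu
  have hcc := count_chain f g u l a hch
  rw [if_pos rfl] at hcc
  rw [if_neg (by intro h; exact hne h.symm)] at hcc
  rw [show (a :: l) = t from rfl] at hcc
  by_contra hcon
  push_neg at hcon
  have hsub : S.filter (fun e => g e = u) ⊆ t.toFinset := by
    intro x hx
    rw [Finset.mem_filter] at hx
    rcases Classical.em (x ∈ t) with h | h
    · simpa using h
    · exact absurd hx.2 (hcon x hx.1 h)
  have hfe1 : t.toFinset.filter (fun e => g e = u)
      = (t.filter (fun x => decide (g x = u))).toFinset := by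
    ext x; simp
  have hfe2 : t.toFinset.filter (fun e => f e = u)
      = (t.filter (fun x => decide (f x = u))).toFinset := by
    ext x; simp
  have hcnt1 : (t.toFinset.filter (fun e => g e = u)).card
      = t.countP (fun x => decide (g x = u)) := by
    rw [hfe1, List.toFinset_card_of_nodup (hnd.filter _), List.countP_eq_length_filter]
  have hcnt2 : (t.toFinset.filter (fun e => f e = u)).card
      = t.countP (fun x => decide (f x = u)) := by
    rw [hfe2, List.toFinset_card_of_nodup (hnd.filter _), List.countP_eq_length_filter]
  have hle1 : (S.filter (fun e => g e = u)).card ≤ t.countP (fun x => decide (g x = u)) := by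
    rw [← hcnt1]
    exact Finset.card_le_card (fun x hx => Finset.mem_filter.mpr
      ⟨hsub hx, (Finset.mem_filter.mp hx).2⟩)
  have hle2 : t.countP (fun x => decide (f x = u)) ≤ (S.filter (fun e => f e = u)).card := by
    rw [← hcnt2]
    exact Finset.card_le_card (fun x hx => by
      rw [Finset.mem_filter] at hx ⊢
      exact ⟨hS x (by simpa using hx.1), hx.2⟩)
  have := hbal u
  omega


lemma walk (f g : α → W) (S : Finset α)
    (hbal : ∀ u, (S.filter fun e => f e = u).card = (S.filter fun e => g e = u).card) :
    ∀ (n : ℕ) (a : α) (l : List α), S.card - (a :: l).length ≤ n →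
      (a :: l).Nodup → (∀ e ∈ a :: l, e ∈ S) →
      List.Chain' (fun x y => f x = g y) (a :: l) →
      (∀ b ∈ (a :: l).dropLast, f b ≠ g a) →
      ∃ m : List α, (a :: (l ++ m)).Nodup ∧ (∀ e ∈ a :: (l ++ m), e ∈ S) ∧
        List.Chain' (fun x y => f x = g y) (a :: (l ++ m)) ∧
        (∀ x ∈ (a :: (l ++ m)).getLast?, f x = g a) ∧
        (∀ b ∈ (a :: (l ++ m)).dropLast, f b ≠ g a) := by
  intro n
  induction n with
  | zero =>
    intro a l hlen hnd hS hch hdl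
    by_cases hclose : f ((a :: l).getLast (List.cons_ne_nil a l)) = g a
    · refine ⟨[], by simpa using hnd, by simpa using hS, by simpa using hch, ?_, by simpa using hdl⟩
      intro x hx
      simp only [List.append_nil] at hx
      rw [List.getLast?_eq_getLast (List.cons_ne_nil a l)] at hx
      simp only [Option.mem_def, Option.some.injEq] at hx
      rw [← hx]; exact hclose
    · exfalso
      obtain ⟨b, hbS, hbnotin, hgb⟩ := extend_trail f g S hbal a l hnd hS hch hclose
      have h1 : ((a :: l) ++ [b]).Nodup := by
        rw [List.nodup_append]
        exact ⟨hnd, List.nodup_singleton b,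
          fun x hx y hy hxy => hbnotin (by rw [List.mem_singleton.mp hy] at hxy; exact hxy ▸ hx)⟩
      have h2 : ∀ e ∈ (a :: l) ++ [b], e ∈ S := by
        intro e he
        rcases List.mem_append.mp he with h | h
        · exact hS e h
        · simpa using (List.mem_singleton.mp h) ▸ hbS
      have hle : ((a :: l) ++ [b]).length ≤ S.card := by
        have := List.toFinset_card_of_nodup h1
        have hsub : ((a :: l) ++ [b]).toFinset ⊆ S := fun x hx => h2 x (by simp at hx ⊢; tauto)
        have := Finset.card_le_card hsub
        omega
      simp only [List.length_append, List.length_cons, List.length_singleton] at hle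
      simp only [List.length_cons] at hlen
      omega
  | succ n ih =>
    intro a l hlen hnd hS hch hdl
    by_cases hclose : f ((a :: l).getLast (List.cons_ne_nil a l)) = g a
    · refine ⟨[], by simpa using hnd, by simpa using hS, by simpa using hch, ?_, by simpa using hdl⟩
      intro x hx
      simp only [List.append_nil] at hx
      rw [List.getLast?_eq_getLast (List.cons_ne_nil a l)] at hx
      simp only [Option.mem_def, Option.some.injEq] at hx
      rw [← hx]; exact hclose
    · obtain ⟨b, hbS, hbnotin, hgb⟩ := extend_trail f g S hbal a l hnd hS hch hclose
      have h1 : (a :: (l ++ [b])).Nodup := by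
        rw [show a :: (l ++ [b]) = (a :: l) ++ [b] from rfl, List.nodup_append]
        exact ⟨hnd, List.nodup_singleton b,
          fun x hx y hy hxy => hbnotin (by rw [List.mem_singleton.mp hy] at hxy; exact hxy ▸ hx)⟩
      have h2 : ∀ e ∈ a :: (l ++ [b]), e ∈ S := by
        intro e he
        rcases List.mem_append.mp (by simpa using he : e ∈ (a :: l) ++ [b]) with h | h
        · exact hS e h
        · simpa using (List.mem_singleton.mp h) ▸ hbS
      have h3 : List.Chain' (fun x y => f x = g y) (a :: (l ++ [b])) := by
        rw [show a :: (l ++ [b]) = (a :: l) ++ [b] from rfl]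
        simp only [List.Chain']
        rw [List.isChain_append]
        refine ⟨hch, List.isChain_singleton b, ?_⟩
        intro x hx y hy
        rw [List.getLast?_eq_getLast (List.cons_ne_nil a l)] at hx
        simp only [Option.mem_def, Option.some.injEq] at hx
        simp only [List.head?_cons, Option.mem_def, Option.some.injEq] at hy
        rw [← hx, ← hy]; exact hgb.symm
      have h4 : ∀ c ∈ (a :: (l ++ [b])).dropLast, f c ≠ g a := by
        rw [show a :: (l ++ [b]) = (a :: l) ++ [b] from rfl, List.dropLast_concat]
        intro c hc
        have heq := List.dropLast_append_getLast (List.cons_ne_nil a l)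
        rw [← heq] at hc
        rcases List.mem_append.mp hc with h | h
        · exact hdl c h
        · rw [List.mem_singleton.mp h]; exact hclose
      have hlen' : S.card - (a :: (l ++ [b])).length ≤ n := by
        simp only [List.length_cons, List.length_append, List.length_singleton] at hlen ⊢
        omega
      obtain ⟨m, k1, k2, k3, k4, k5⟩ := ih a (l ++ [b]) hlen' h1 h2 h3 h4
      have heq : l ++ [b] ++ m = l ++ b :: m := by simp
      rw [heq] at k1 k2 k3 k4 k5
      exact ⟨b :: m, k1, k2, k3, k4, k5⟩



variable {G : Multigraph} (O O' : G.PartialOrientation)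

/-- The traversal direction of a difference edge. -/
def dirOf (e : G.E) : Bool := (O e).getD (!((O' e).getD true))

/-- Head of the arc associated to a difference edge (⊤ = `none` for an `O`-unoriented edge). -/
def ahd (e : G.E) : Option G.V :=
  if O e = none then none else some (G.dhead e (dirOf O O' e))

/-- Tail of the arc associated to a difference edge (⊤ = `none` for an `O'`-unoriented edge). -/
def atl (e : G.E) : Option G.V :=
  if O' e = none then none else some (G.dtail e (dirOf O O' e))

lemma dhead_neg (e : G.E) (b : Bool) : G.dhead e (!b) = G.dtail e b := by
  cases b <;> simp [Multigraph.dhead, Multigraph.dtail]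

lemma O_eq_dir {e : G.E} (h : O e ≠ none) : O e = some (dirOf O O' e) := by
  cases hO : O e with
  | none => exact absurd hO h
  | some b => simp [dirOf, hO]

lemma O'_eq_dir {e : G.E} (hD : O' e ≠ O e) (h : O' e ≠ none) :
    O' e = some (!(dirOf O O' e)) := by
  cases hO' : O' e with
  | none => exact absurd hO' h
  | some b =>
    cases hO : O e with
    | none => simp [dirOf, hO, hO']
    | some b' =>
      have hbb : b ≠ b' := by
        rw [hO, hO'] at hD; simpa using hD
      simp only [dirOf, hO, Option.getD_some, Option.some.injEq]
      cases b <;> cases b' <;> simp_all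

lemma ahd_eq_none {e : G.E} : ahd O O' e = none ↔ O e = none := by
  unfold ahd; split <;> simp_all

lemma atl_eq_none {e : G.E} : atl O O' e = none ↔ O' e = none := by
  unfold atl; split <;> simp_all

lemma heads_eq {x y : G.E} (h : ahd O O' x = atl O O' y) (hx : ahd O O' x ≠ none) :
    G.dhead x (dirOf O O' x) = G.dtail y (dirOf O O' y) := by
  have hOx : ¬(O x = none) := fun hh => hx (by simp [ahd, hh])
  rw [ahd, if_neg hOx] at h
  by_cases hO'y : O' y = none
  · rw [atl, if_pos hO'y] at h; exact absurd h (by simp)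
  · rw [atl, if_neg hO'y] at h
    exact Option.some.injEq _ _ ▸ h

lemma mem_ahd_some {e : G.E} {v : G.V} :
    (∃ b, O e = some b ∧ G.dhead e b = v) ↔ ahd O O' e = some v := by
  cases hO : O e with
  | none => simp [ahd, hO]
  | some b => simp [ahd, hO, dirOf]

lemma mem_atl_some {e : G.E} {v : G.V} (hD : O' e ≠ O e) :
    (∃ b, O' e = some b ∧ G.dhead e b = v) ↔ atl O O' e = some v := by
  by_cases hO' : O' e = none
  · simp [atl, hO']
  · have hb : O' e = some (!(dirOf O O' e)) := O'_eq_dir O O' hD hO'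
    rw [atl, if_neg hO']
    constructor
    · rintro ⟨b, hb2, hv⟩
      rw [hb] at hb2
      have hb3 : b = !(dirOf O O' e) := by
        injection hb2 with h; exact h.symm
      rw [hb3, dhead_neg] at hv
      simp [hv]
    · intro h
      refine ⟨!(dirOf O O' e), hb, ?_⟩
      rw [dhead_neg]
      simpa using h

lemma indeg_eq (P : G.PartialOrientation) (v : G.V) :
    G.indeg P v
      = (Finset.univ.filter (fun e => ∃ b, P e = some b ∧ G.dhead e b = v)).card := by
  rw [Multigraph.indeg, Nat.card_eq_fintype_card, Fintype.card_subtype]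

lemma card_ne_none (P : G.PartialOrientation) :
    (Finset.univ.filter (fun e : G.E => P e ≠ none)).card
      = ∑ v : G.V,
          (Finset.univ.filter (fun e => ∃ b, P e = some b ∧ G.dhead e b = v)).card := by
  rw [Finset.card_eq_sum_card_fiberwise
    (f := fun e => G.dhead e ((P e).getD true)) (t := Finset.univ)
    (fun _ _ => Finset.mem_univ _)]
  refine Finset.sum_congr rfl fun v _ => ?_
  congr 1
  ext e
  simp only [Finset.mem_filter, Finset.mem_univ, true_and]
  cases hP : P e with
  | none => simp [hP]
  | some b => simp [hP]

/-- The set of difference edges. -/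
def Dset (O O' : G.PartialOrientation) : Finset G.E :=
  Finset.univ.filter (fun e => O' e ≠ O e)

lemma balance (hdeg : ∀ v, G.indeg O v = G.indeg O' v) (u : Option G.V) :
    ((Dset O O').filter (fun e => ahd O O' e = u)).card
      = ((Dset O O').filter (fun e => atl O O' e = u)).card := by
  cases u with
  | some v =>
    set In := Finset.univ.filter (fun e => ∃ b, O e = some b ∧ G.dhead e b = v) with hIn
    set In' := Finset.univ.filter (fun e => ∃ b, O' e = some b ∧ G.dhead e b = v) with hIn'
    have h1 : In ∩ Dset O O' = (Dset O O').filter (fun e => ahd O O' e = some v) := by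
      ext e
      simp only [hIn, Finset.mem_inter, Finset.mem_filter, Finset.mem_univ, true_and, Dset]
      constructor
      · rintro ⟨hex, hd⟩
        exact ⟨hd, (mem_ahd_some O O').mp hex⟩
      · rintro ⟨hd, hex⟩
        exact ⟨(mem_ahd_some O O').mpr hex, hd⟩
    have h2 : In' ∩ Dset O O' = (Dset O O').filter (fun e => atl O O' e = some v) := by
      ext e
      simp only [hIn', Finset.mem_inter, Finset.mem_filter, Finset.mem_univ, true_and, Dset]
      constructor
      · rintro ⟨hex, hd⟩
        exact ⟨hd, (mem_atl_some O O' hd).mp hex⟩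
      · rintro ⟨hd, hex⟩
        exact ⟨(mem_atl_some O O' hd).mpr hex, hd⟩
    have h3 : In \ Dset O O' = In' \ Dset O O' := by
      ext e
      simp only [hIn, hIn', Finset.mem_sdiff, Finset.mem_filter, Finset.mem_univ, true_and,
        Dset, not_not]
      constructor
      · rintro ⟨hex, hd⟩; exact ⟨hd ▸ hex, hd⟩
      · rintro ⟨hex, hd⟩; exact ⟨hd ▸ hex, hd⟩
    have hs1 := Finset.card_inter_add_card_sdiff In (Dset O O')
    have hs2 := Finset.card_inter_add_card_sdiff In' (Dset O O')
    have hII : In.card = In'.card := by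
      rw [← indeg_eq, ← indeg_eq]; exact hdeg v
    rw [h1] at hs1; rw [h2, ← h3] at hs2
    omega
  | none =>
    set A := Finset.univ.filter (fun e : G.E => O e ≠ none) with hA
    set A' := Finset.univ.filter (fun e : G.E => O' e ≠ none) with hA'
    have hAA : A.card = A'.card := by
      rw [hA, hA', card_ne_none, card_ne_none]
      refine Finset.sum_congr rfl fun v _ => ?_
      rw [← indeg_eq, ← indeg_eq]; exact hdeg v
    have h3 : A \ Dset O O' = A' \ Dset O O' := by
      ext e
      simp only [hA, hA', Finset.mem_sdiff, Finset.mem_filter, Finset.mem_univ, true_and,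
        Dset, not_not]
      constructor
      · rintro ⟨hex, hd⟩; exact ⟨hd ▸ hex, hd⟩
      · rintro ⟨hex, hd⟩; exact ⟨hd ▸ hex, hd⟩
    have hs1 := Finset.card_inter_add_card_sdiff A (Dset O O')
    have hs2 := Finset.card_inter_add_card_sdiff A' (Dset O O')
    have hq1 : (Dset O O').filter (fun e => O e = none) = Dset O O' \ A := by
      ext e
      simp only [hA, Dset, Finset.mem_sdiff, Finset.mem_filter, Finset.mem_univ, true_and,
        not_not]
    have hq2 : (Dset O O').filter (fun e => O' e = none) = Dset O O' \ A' := by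
      ext e
      simp only [hA', Dset, Finset.mem_sdiff, Finset.mem_filter, Finset.mem_univ, true_and,
        not_not]
    have hp1 := Finset.card_inter_add_card_sdiff (Dset O O') A
    have hp2 := Finset.card_inter_add_card_sdiff (Dset O O') A'
    rw [Finset.inter_comm] at hp1 hp2
    have h3c : (A \ Dset O O').card = (A' \ Dset O O').card := by rw [h3]
    have he1 : (Dset O O').filter (fun e => ahd O O' e = none)
        = (Dset O O').filter (fun e => O e = none) := by
      apply Finset.filter_congr; intro e _; simp [ahd_eq_none]
    have he2 : (Dset O O').filter (fun e => atl O O' e = none)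
        = (Dset O O').filter (fun e => O' e = none) := by
      apply Finset.filter_congr; intro e _; simp [atl_eq_none]
    rw [he1, he2, hq1, hq2]
    omega


lemma map_fst (t : List G.E) :
    (t.map (fun e => (e, dirOf O O' e))).map Prod.fst = t := by
  rw [List.map_map]
  conv_rhs => rw [← List.map_id t]
  rfl

lemma steps_chain {t : List G.E}
    (hch : List.Chain' (fun x y => ahd O O' x = atl O O' y) t)
    (hdl : ∀ b ∈ t.dropLast, ahd O O' b ≠ none) :
    List.Chain' (fun s u => G.dhead s.1 s.2 = G.dtail u.1 u.2)
      (t.map (fun e => (e, dirOf O O' e))) := by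
  simp only [List.Chain']
  rw [List.isChain_map]
  exact List.IsChain.imp
    (fun a b h => heads_eq O O' h.1 h.2) (chain_strengthen (ahd O O') (atl O O') t hch hdl)

lemma mk_cycle {t : List G.E} (ht : t ≠ []) (hnd : t.Nodup)
    (hch : List.Chain' (fun x y => ahd O O' x = atl O O' y) t)
    (hclose : ∀ x ∈ t.getLast?, ahd O O' x = atl O O' (t.head ht))
    (hR : ∀ e ∈ t, ahd O O' e ≠ none ∧ atl O O' e ≠ none)
    (hD : ∀ e ∈ t, O' e ≠ O e) :
    G.IsDCycle O (t.map (fun e => (e, dirOf O O' e))) ∧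
      (∀ s ∈ t.map (fun e => (e, dirOf O O' e)), O' s.1 = some (!s.2)) := by
  have hmem : ∀ s ∈ t.map (fun e => (e, dirOf O O' e)), s.1 ∈ t ∧ s = (s.1, dirOf O O' s.1) := by
    intro s hs
    rw [List.mem_map] at hs
    obtain ⟨e, he, rfl⟩ := hs
    exact ⟨he, rfl⟩
  constructor
  · refine ⟨by simp [ht], ?_, ?_, ?_⟩
    · intro s hs
      obtain ⟨hmem1, hform⟩ := hmem s hs
      rw [hform]
      exact O_eq_dir O O' (fun hh => (hR s.1 hmem1).1 ((ahd_eq_none O O').mpr hh))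
    · simp only [List.Chain']
      rw [List.isChain_append]
      obtain ⟨a, rest, rfl⟩ := List.exists_cons_of_ne_nil ht
      refine ⟨steps_chain O O' hch (fun b hb => (hR b (dropLast_subset' _ b hb)).1), ?_, ?_⟩
      · simp
      · intro x hx y hy
        have hgl : ((a :: rest).map (fun e => (e, dirOf O O' e))).getLast?
            = some (((a :: rest).getLast ht, dirOf O O' ((a :: rest).getLast ht))) := by
          rw [List.getLast?_map, List.getLast?_eq_getLast ht]
          rfl
        rw [hgl, Option.mem_def, Option.some.injEq] at hx
        rw [Option.mem_def] at hy
        have hy2 : y = (a, dirOf O O' a) := by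
          have hred : (List.take 1 (List.map (fun e => (e, dirOf O O' e)) (a :: rest))).head?
              = some (a, dirOf O O' a) := rfl
          rw [hred] at hy
          exact (Option.some.inj hy).symm
        rw [← hx, hy2]
        have hcl := hclose ((a :: rest).getLast ht)
          (by rw [List.getLast?_eq_getLast ht]; exact rfl)
        rw [List.head_cons] at hcl
        exact heads_eq O O' hcl (hR _ (List.getLast_mem ht)).1
    · rw [map_fst]
      exact hnd
  · intro s hs
    obtain ⟨hmem1, hform⟩ := hmem s hs
    rw [hform]
    exact O'_eq_dir O O' (hD s.1 hmem1)
      (fun hh => (hR s.1 hmem1).2 ((atl_eq_none O O').mpr hh))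

lemma mk_path {t : List G.E} (ht : t ≠ []) (hnd : t.Nodup)
    (hch : List.Chain' (fun x y => ahd O O' x = atl O O' y) t)
    (hclose : ∀ x ∈ t.getLast?, ahd O O' x = none)
    (hOp : atl O O' (t.head ht) = none)
    (hdl : ∀ b ∈ t.dropLast, ahd O O' b ≠ none)
    (hD : ∀ e ∈ t, O' e ≠ O e) :
    G.IsHalfOpenPath O (t.map (fun e => (e, dirOf O O' e))) ∧
      (∀ h : (t.map (fun e => (e, dirOf O O' e))) ≠ [],
        O' ((t.map (fun e => (e, dirOf O O' e))).head h).1 = none) ∧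
      (∀ s ∈ (t.map (fun e => (e, dirOf O O' e))).tail, O' s.1 = some (!s.2)) := by
  obtain ⟨a, rest, rfl⟩ := List.exists_cons_of_ne_nil ht
  rw [List.head_cons] at hOp
  have hmem : ∀ s ∈ (a :: rest).map (fun e => (e, dirOf O O' e)),
      s.1 ∈ a :: rest ∧ s = (s.1, dirOf O O' s.1) := by
    intro s hs
    rw [List.mem_map] at hs
    obtain ⟨e, he, rfl⟩ := hs
    exact ⟨he, rfl⟩
  have hrest : rest ≠ [] := by
    rintro rfl
    have h1 := hclose a (by simp)
    rw [ahd_eq_none] at h1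
    rw [atl_eq_none] at hOp
    exact hD a (by simp) (hOp.trans h1.symm)
  refine ⟨⟨?_, ?_, ?_, ?_, ?_⟩, ?_, ?_⟩
  · -- 2 ≤ length
    obtain ⟨b, rest', rfl⟩ := List.exists_cons_of_ne_nil hrest
    simp only [List.map_cons, List.length_cons]
    omega
  · exact steps_chain O O' hch hdl
  · rw [map_fst]; exact hnd
  · -- dropLast oriented
    intro s hs
    rw [← List.map_dropLast] at hs
    rw [List.mem_map] at hs
    obtain ⟨e, he, rfl⟩ := hs
    exact O_eq_dir O O' (fun hh => hdl e he ((ahd_eq_none O O').mpr hh))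
  · -- last unoriented
    intro h
    have hgl : ((a :: rest).map (fun e => (e, dirOf O O' e))).getLast h
        = ((a :: rest).getLast ht, dirOf O O' ((a :: rest).getLast ht)) := by
      have := List.getLast?_map (f := fun e => (e, dirOf O O' e)) (l := a :: rest)
      rw [List.getLast?_eq_getLast ht, List.getLast?_eq_getLast h] at this
      simpa using this
    rw [hgl]
    have h1 := hclose ((a :: rest).getLast ht)
      (by rw [List.getLast?_eq_getLast ht]; exact rfl)
    rw [ahd_eq_none] at h1
    exact h1
  · -- head becomes unoriented in O'
    intro h
    have hh : ((a :: rest).map (fun e => (e, dirOf O O' e))).head h = (a, dirOf O O' a) := rfl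
    rw [hh]
    rw [atl_eq_none] at hOp
    exact hOp
  · -- tail reversed in O'
    intro s hs
    have htl : ((a :: rest).map (fun e => (e, dirOf O O' e))).tail
        = rest.map (fun e => (e, dirOf O O' e)) := rfl
    rw [htl, List.mem_map] at hs
    obtain ⟨e, he, rfl⟩ := hs
    have hatl : atl O O' e ≠ none :=
      chain_tail (ahd O O') (atl O O') (a :: rest) hch hdl e he
    exact O'_eq_dir O O' (hD e (List.mem_cons_of_mem a he))
      (fun hh => hatl ((atl_eq_none O O').mpr hh))

lemma decomp :
    ∀ (n : ℕ) (S : Finset G.E), S.card ≤ n → (∀ e ∈ S, O' e ≠ O e) →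
      (∀ u, (S.filter fun e => ahd O O' e = u).card
          = (S.filter fun e => atl O O' e = u).card) →
      ∃ L P : List (List (G.E × Bool)),
        (∀ c ∈ L, G.IsDCycle O c) ∧ (∀ p ∈ P, G.IsHalfOpenPath O p) ∧
        (L ++ P).Pairwise (fun a b => ∀ e, e ∈ a.map Prod.fst → e ∉ b.map Prod.fst) ∧
        (∀ e, (∃ w ∈ L ++ P, e ∈ w.map Prod.fst) ↔ e ∈ S) ∧
        (∀ c ∈ L, ∀ s ∈ c, O' s.1 = some (!s.2)) ∧
        (∀ p ∈ P, ∀ h : p ≠ [], O' (p.head h).1 = none) ∧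
        (∀ p ∈ P, ∀ s ∈ p.tail, O' s.1 = some (!s.2)) := by
  intro n
  induction n with
  | zero =>
    intro S hcard _ _
    have hS : S = ∅ := Finset.card_eq_zero.mp (Nat.le_zero.mp hcard)
    subst hS
    exact ⟨[], [], by simp, by simp, by simp, by simp, by simp, by simp, by simp⟩
  | succ n ih =>
    intro S hcard hD hbal
    by_cases hSe : S = ∅
    · subst hSe
      exact ⟨[], [], by simp, by simp, by simp, by simp, by simp, by simp, by simp⟩
    have hstart : ∃ e0 ∈ S, atl O O' e0 = none ∨ ∀ e ∈ S, atl O O' e ≠ none := by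
      by_cases h : ∃ e ∈ S, atl O O' e = none
      · obtain ⟨e0, he0, h0⟩ := h
        exact ⟨e0, he0, Or.inl h0⟩
      · push_neg at h
        obtain ⟨e0, he0⟩ := Finset.nonempty_iff_ne_empty.mpr hSe
        exact ⟨e0, he0, Or.inr h⟩
    obtain ⟨e0, he0S, hbr⟩ := hstart
    obtain ⟨m, tnd, tS, tch, tclose, tdl⟩ :=
      walk (ahd O O') (atl O O') S hbal S.card e0 [] (by omega) (by simp)
        (by simpa using he0S) (by simp [List.Chain']) (by simp)
    simp only [List.nil_append] at tnd tS tch tclose tdl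
    have htne : (e0 :: m) ≠ [] := List.cons_ne_nil _ _
    have htsub : (e0 :: m).toFinset ⊆ S := fun x hx => tS x (by simpa using hx)
    have htDe : ∀ e ∈ (e0 :: m), O' e ≠ O e := fun e he => hD e (tS e he)
    set S' := S \ (e0 :: m).toFinset with hS'def
    have hcard' : S'.card ≤ n := by
      have h1 : (e0 :: m).toFinset.card = (e0 :: m).length := List.toFinset_card_of_nodup tnd
      have h2 : S'.card = S.card - (e0 :: m).toFinset.card := Finset.card_sdiff_of_subset htsub
      have h3 : 0 < (e0 :: m).length := by simp
      omega
    have hD' : ∀ e ∈ S', O' e ≠ O e := fun e he => hD e (Finset.mem_sdiff.mp he).1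
    have tcount : ∀ u, (e0 :: m).countP (fun x => decide (ahd O O' x = u))
        = (e0 :: m).countP (fun x => decide (atl O O' x = u)) := by
      intro u
      have hcc := count_chain (ahd O O') (atl O O') u m e0 tch
      have hlast : ahd O O' ((e0 :: m).getLast htne) = atl O O' e0 :=
        tclose _ (by rw [List.getLast?_eq_getLast htne]; exact rfl)
      have hcond : (ahd O O' ((e0 :: m).getLast (List.cons_ne_nil e0 m)) = u)
          = (atl O O' e0 = u) := by rw [hlast]
      simp only [hcond] at hcc
      omega
    have hbal' : ∀ u, (S'.filter fun e => ahd O O' e = u).card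
        = (S'.filter fun e => atl O O' e = u).card := by
      intro u
      have key : ∀ (f : G.E → Option G.V),
          (S.filter fun e => f e = u).card
            = (S'.filter fun e => f e = u).card
              + (e0 :: m).countP (fun x => decide (f x = u)) := by
        intro f
        have hu : S' ∪ (e0 :: m).toFinset = S := Finset.sdiff_union_of_subset htsub
        have hdisj : Disjoint (S'.filter fun e => f e = u)
            ((e0 :: m).toFinset.filter fun e => f e = u) :=
          Finset.disjoint_filter_filter Finset.sdiff_disjoint
        have hsplit : S.filter (fun e => f e = u)
            = (S'.filter fun e => f e = u) ∪ ((e0 :: m).toFinset.filter fun e => f e = u) := by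
          rw [← Finset.filter_union, hu]
        rw [hsplit, Finset.card_union_of_disjoint hdisj]
        congr 1
        have hfe : (e0 :: m).toFinset.filter (fun e => f e = u)
            = ((e0 :: m).filter (fun x => decide (f x = u))).toFinset := by
          ext x; simp
        rw [hfe, List.toFinset_card_of_nodup (tnd.filter _), List.countP_eq_length_filter]
      have k1 := key (ahd O O')
      have k2 := key (atl O O')
      have k3 := tcount u
      have k4 := hbal u
      omega
    obtain ⟨L', P', c1, c2, c3, c4, c5, c6, c7⟩ := ih S' hcard' hD' hbal'
    have hcross : ∀ w ∈ L' ++ P', ∀ e, e ∈ w.map Prod.fst → e ∉ (e0 :: m) := by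
      intro w hw e hew het
      have : e ∈ S' := (c4 e).mp ⟨w, hw, hew⟩
      exact (Finset.mem_sdiff.mp this).2 (by simpa using het)
    have hstfst : ((e0 :: m).map (fun e => (e, dirOf O O' e))).map Prod.fst = (e0 :: m) :=
      map_fst O O' (e0 :: m)
    have hmemiff : ∀ e, e ∈ S ↔ (e ∈ (e0 :: m) ∨ e ∈ S') := by
      intro e
      constructor
      · intro he
        by_cases h : e ∈ (e0 :: m)
        · exact Or.inl h
        · exact Or.inr (Finset.mem_sdiff.mpr ⟨he, fun hh => h (by simpa using hh)⟩)
      · rintro (h | h)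
        · exact tS e h
        · exact (Finset.mem_sdiff.mp h).1
    rcases hbr with hOp | hall
    · -- path branch
      have hclose' : ∀ x ∈ (e0 :: m).getLast?, ahd O O' x = none := by
        intro x hx
        rw [tclose x hx]
        exact hOp
      have hdl' : ∀ b ∈ (e0 :: m).dropLast, ahd O O' b ≠ none := by
        intro b hb
        have h := tdl b hb
        rw [hOp] at h
        exact h
      obtain ⟨hpath, hhead, htail⟩ := mk_path O O' htne tnd tch hclose' hOp hdl' htDe
      refine ⟨L', ((e0 :: m).map (fun e => (e, dirOf O O' e))) :: P', c1, ?_, ?_, ?_, c5, ?_, ?_⟩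
      · intro p hp
        rcases List.mem_cons.mp hp with rfl | hp'
        · exact hpath
        · exact c2 p hp'
      · rw [List.pairwise_append] at c3 ⊢
        refine ⟨c3.1, ?_, ?_⟩
        · rw [List.pairwise_cons]
          refine ⟨?_, c3.2.1⟩
          intro w hw e hest hew
          exact hcross w (List.mem_append.mpr (Or.inr hw)) e hew
            (by rw [hstfst] at hest; exact hest)
        · intro x hx y hy
          rcases List.mem_cons.mp hy with rfl | hy'
          · intro e hex hey
            exact hcross x (List.mem_append.mpr (Or.inl hx)) e hex
              (by rw [hstfst] at hey; exact hey)
          · exact c3.2.2 x hx y hy'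
      · intro e
        rw [hmemiff e]
        constructor
        · rintro ⟨w, hw, hew⟩
          rcases List.mem_append.mp hw with hwL | hwP
          · exact Or.inr ((c4 e).mp ⟨w, List.mem_append.mpr (Or.inl hwL), hew⟩)
          · rcases List.mem_cons.mp hwP with rfl | hwP'
            · exact Or.inl (by rw [hstfst] at hew; exact hew)
            · exact Or.inr ((c4 e).mp ⟨w, List.mem_append.mpr (Or.inr hwP'), hew⟩)
        · rintro (h | h)
          · exact ⟨(e0 :: m).map (fun e => (e, dirOf O O' e)),
              List.mem_append.mpr (Or.inr (List.mem_cons_self)),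
              by rw [hstfst]; exact h⟩
          · obtain ⟨w, hw, hew⟩ := (c4 e).mpr h
            rcases List.mem_append.mp hw with hwL | hwP
            · exact ⟨w, List.mem_append.mpr (Or.inl hwL), hew⟩
            · exact ⟨w, List.mem_append.mpr (Or.inr (List.mem_cons_of_mem _ hwP)), hew⟩
      · intro p hp
        rcases List.mem_cons.mp hp with rfl | hp'
        · exact hhead
        · exact c6 p hp'
      · intro p hp
        rcases List.mem_cons.mp hp with rfl | hp'
        · exact htail
        · exact c7 p hp'
    · -- cycle branch
      have hahd : ∀ e ∈ S, ahd O O' e ≠ none := by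
        intro e he hnone
        have h0 : (S.filter fun e => atl O O' e = (none : Option G.V)) = ∅ := by
          rw [Finset.filter_eq_empty_iff]
          intro x hx
          exact hall x hx
        have h1 := hbal (none : Option G.V)
        rw [h0, Finset.card_empty, Finset.card_eq_zero, Finset.filter_eq_empty_iff] at h1
        exact h1 he hnone
      have hR : ∀ e ∈ (e0 :: m), ahd O O' e ≠ none ∧ atl O O' e ≠ none :=
        fun e he => ⟨hahd e (tS e he), hall e (tS e he)⟩
      obtain ⟨hcyc, hrev⟩ := mk_cycle O O' htne tnd tch
        (by intro x hx; rw [tclose x hx]; rfl) hR htDe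
      refine ⟨((e0 :: m).map (fun e => (e, dirOf O O' e))) :: L', P', ?_, c2, ?_, ?_, ?_, c6, c7⟩
      · intro c hc
        rcases List.mem_cons.mp hc with rfl | hc'
        · exact hcyc
        · exact c1 c hc'
      · rw [show (((e0 :: m).map (fun e => (e, dirOf O O' e))) :: L') ++ P'
            = ((e0 :: m).map (fun e => (e, dirOf O O' e))) :: (L' ++ P') from rfl,
          List.pairwise_cons]
        refine ⟨?_, c3⟩
        intro w hw e hest hew
        exact hcross w hw e hew (by rw [hstfst] at hest; exact hest)
      · intro e
        rw [hmemiff e]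
        constructor
        · rintro ⟨w, hw, hew⟩
          rcases List.mem_cons.mp hw with rfl | hw'
          · exact Or.inl (by rw [hstfst] at hew; exact hew)
          · exact Or.inr ((c4 e).mp ⟨w, hw', hew⟩)
        · rintro (h | h)
          · exact ⟨(e0 :: m).map (fun e => (e, dirOf O O' e)),
              List.mem_cons_self, by rw [hstfst]; exact h⟩
          · obtain ⟨w, hw, hew⟩ := (c4 e).mpr h
            exact ⟨w, List.mem_cons_of_mem _ hw, hew⟩
      · intro c hc
        rcases List.mem_cons.mp hc with rfl | hc'
        · exact hrev
        · exact c5 c hc'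

end Stmt14Aux

/-- two partial orientations with the same indegree sequence are related by
an edge-disjoint union of directed cycle reversals and Jacob's ladder cascades. -/
theorem stmt14 (G : Multigraph) (hG : G.Connected) (O O' : G.PartialOrientation)
    (hdeg : ∀ v, G.indeg O v = G.indeg O' v) :
    ∃ L P : List (List (G.E × Bool)),
      (∀ c ∈ L, G.IsDCycle O c) ∧ (∀ p ∈ P, G.IsHalfOpenPath O p) ∧
      (L ++ P).Pairwise (fun a b => ∀ e, e ∈ a.map Prod.fst → e ∉ b.map Prod.fst) ∧
      (∀ e, (∀ w ∈ L ++ P, e ∉ w.map Prod.fst) → O' e = O e) ∧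
      (∀ c ∈ L, ∀ s ∈ c, O' s.1 = some (!s.2)) ∧
      (∀ p ∈ P, ∀ h : p ≠ [], O' (p.head h).1 = none) ∧
      (∀ p ∈ P, ∀ s ∈ p.tail, O' s.1 = some (!s.2)) := by
  classical
  obtain ⟨L, P, c1, c2, c3, c4, c5, c6, c7⟩ :=
    Stmt14Aux.decomp O O' (Stmt14Aux.Dset O O').card (Stmt14Aux.Dset O O') le_rfl
      (fun e he => (Finset.mem_filter.mp he).2)
      (Stmt14Aux.balance O O' hdeg)
  refine ⟨L, P, c1, c2, c3, ?_, c5, c6, c7⟩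
  intro e he
  by_contra hne
  have hmem : e ∈ Stmt14Aux.Dset O O' :=
    Finset.mem_filter.mpr ⟨Finset.mem_univ e, hne⟩
  obtain ⟨w, hw, hew⟩ := (c4 e).mpr hmem
  exact he w hw hew
end
end
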